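/- arXiv:1202.4184 — 7 statements merged into one kernel-verified Lean document; each statement's English description precedes it below -/
import Mathlib

section
/- For positive semidefinite matrices A and B, the operator norm of the product AB is at most the square of the operator norm of their average: ‖AB‖ ≤ ‖(A+B)/2‖². -/
open Matrix
open scoped RealInnerProductSpace

/-- The operator (spectral) norm of a real square matrix. -/
noncomputable def opNorm {d : ℕ} (A : Matrix (Fin d) (Fin d) ℝ) : ℝ :=
  ‖Matrix.toEuclideanCLM (𝕜 := ℝ) (n := Fin d) A‖

section Aux

variable {d : ℕ}

private lemma cs_psd {T : EuclideanSpace ℝ (Fin d) →L[ℝ] EuclideanSpace ℝ (Fin d)}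
    (hsym : ∀ x y : EuclideanSpace ℝ (Fin d), ⟪T x, y⟫ = ⟪x, T y⟫)
    (hpos : ∀ x : EuclideanSpace ℝ (Fin d), 0 ≤ ⟪T x, x⟫)
    (x y : EuclideanSpace ℝ (Fin d)) :
    ⟪T x, y⟫ ^ 2 ≤ ⟪T x, x⟫ * ⟪T y, y⟫ := by
  have hyx : ⟪T y, x⟫ = ⟪T x, y⟫ := by
    rw [hsym y x, real_inner_comm]
  have key : ∀ l : ℝ, 0 ≤ ⟪T y, y⟫ * (l * l) + (2 * ⟪T x, y⟫) * l + ⟪T x, x⟫ := by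
    intro l
    have h := hpos (x + l • y)
    have e : ⟪T (x + l • y), x + l • y⟫
        = ⟪T y, y⟫ * (l * l) + (2 * ⟪T x, y⟫) * l + ⟪T x, x⟫ := by
      simp only [map_add, _root_.map_smul, inner_add_left, inner_add_right,
        real_inner_smul_left, real_inner_smul_right, hyx]
      ring
    rw [e] at h
    exact h
  have hd := discrim_le_zero key
  rw [discrim] at hd
  nlinarith [hd]

private lemma psd_inner_zero {T : EuclideanSpace ℝ (Fin d) →L[ℝ] EuclideanSpace ℝ (Fin d)}
    (hsym : ∀ x y : EuclideanSpace ℝ (Fin d), ⟪T x, y⟫ = ⟪x, T y⟫)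
    (hpos : ∀ x : EuclideanSpace ℝ (Fin d), 0 ≤ ⟪T x, x⟫)
    (w : EuclideanSpace ℝ (Fin d)) (hw : ⟪T w, w⟫ = 0) : T w = 0 := by
  have h := cs_psd hsym hpos w (T w)
  rw [hw, zero_mul] at h
  have h3 : ⟪T w, T w⟫ ^ 2 = 0 := le_antisymm h (sq_nonneg _)
  have h2 : ⟪T w, T w⟫ = (0 : ℝ) := by
    exact pow_eq_zero_iff two_ne_zero |>.mp h3
  exact inner_self_eq_zero.mp h2

private lemma scalar_key (τ α β γ : ℝ) (hτ : 0 ≤ τ) (hα : 0 ≤ α) (hβ : 0 ≤ β)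
    (F1 : γ ^ 2 ≤ α * β)
    (F2 : α ^ 2 + γ ^ 2 ≤ 2 * τ * α)
    (F3 : β ^ 2 + γ ^ 2 ≤ 2 * τ * β)
    (F4 : γ ^ 2 * (2 * τ - α - β) ^ 2
      ≤ (2 * τ * α - α ^ 2 - γ ^ 2) * (2 * τ * β - β ^ 2 - γ ^ 2)) :
    γ ^ 2 * (α * β) ≤ τ ^ 4 := by
  have hg : 0 ≤ γ ^ 2 := sq_nonneg γ
  have hu1 : γ ^ 2 ≤ α * (2 * τ - α) := by nlinarith
  have hu2 : α * (2 * τ - α) ≤ τ ^ 2 := by nlinarith [sq_nonneg (τ - α)]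
  have hv1 : γ ^ 2 ≤ β * (2 * τ - β) := by nlinarith
  have hv2 : β * (2 * τ - β) ≤ τ ^ 2 := by nlinarith [sq_nonneg (τ - β)]
  have key : 0 ≤ (α * β - γ ^ 2) * ((2 * τ - α) * (2 * τ - β) - γ ^ 2) := by
    nlinarith [F4]
  rcases eq_or_lt_of_le F1 with h | h
  · -- γ² = αβ
    have hgτ : γ ^ 2 ≤ τ ^ 2 := le_trans hu1 hu2
    have e : γ ^ 2 * (α * β) = γ ^ 2 * γ ^ 2 := by rw [← h]
    rw [e]
    nlinarith [hg, hgτ]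
  · have hw : γ ^ 2 ≤ (2 * τ - α) * (2 * τ - β) := by nlinarith [key, h]
    nlinarith [hu1, hu2, hv1, hv2, hw, h.le, mul_nonneg hα hβ, hg]

set_option maxHeartbeats 1000000 in
private lemma inner_le (TA TB : EuclideanSpace ℝ (Fin d) →L[ℝ] EuclideanSpace ℝ (Fin d))
    (hsymA : ∀ x y : EuclideanSpace ℝ (Fin d), ⟪TA x, y⟫ = ⟪x, TA y⟫)
    (hposA : ∀ x : EuclideanSpace ℝ (Fin d), 0 ≤ ⟪TA x, x⟫)
    (hsymB : ∀ x y : EuclideanSpace ℝ (Fin d), ⟪TB x, y⟫ = ⟪x, TB y⟫)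
    (hposB : ∀ x : EuclideanSpace ℝ (Fin d), 0 ≤ ⟪TB x, x⟫)
    (τ : ℝ) (hτ : 0 ≤ τ)
    (hsum : ∀ z : EuclideanSpace ℝ (Fin d), ⟪TA z, z⟫ + ⟪TB z, z⟫ ≤ 2 * τ * ‖z‖ ^ 2)
    (x y : EuclideanSpace ℝ (Fin d)) :
    ⟪TB y, TA x⟫ ≤ τ ^ 2 * (‖x‖ * ‖y‖) := by
  have hRHS : 0 ≤ τ ^ 2 * (‖x‖ * ‖y‖) := by positivity
  rcases (hposA x).eq_or_lt with ha0 | ha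
  · have : TA x = 0 := psd_inner_zero hsymA hposA x ha0.symm
    rw [this, inner_zero_right]
    exact hRHS
  rcases (hposB y).eq_or_lt with hb0 | hb
  · have : TB y = 0 := psd_inner_zero hsymB hposB y hb0.symm
    rw [this, inner_zero_left]
    exact hRHS
  set a' : ℝ := ⟪TA x, x⟫ with ha'
  set b' : ℝ := ⟪TB y, y⟫ with hb'
  set sa : ℝ := Real.sqrt a' with hsa_def
  set sb : ℝ := Real.sqrt b' with hsb_def
  have hsa : 0 < sa := Real.sqrt_pos.mpr ha
  have hsb : 0 < sb := Real.sqrt_pos.mpr hb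
  have hsa2 : sa ^ 2 = a' := Real.sq_sqrt ha.le
  have hsb2 : sb ^ 2 = b' := Real.sq_sqrt hb.le
  set s : EuclideanSpace ℝ (Fin d) := sa⁻¹ • TA x with hs_def
  set t : EuclideanSpace ℝ (Fin d) := sb⁻¹ • TB y with ht_def
  have hTAx : TA x = sa • s := by
    rw [hs_def, smul_inv_smul₀ (ne_of_gt hsa)]
  have hTBy : TB y = sb • t := by
    rw [ht_def, smul_inv_smul₀ (ne_of_gt hsb)]
  -- the fundamental pointwise bound
  have P : ∀ z : EuclideanSpace ℝ (Fin d), ⟪s, z⟫ ^ 2 + ⟪t, z⟫ ^ 2 ≤ 2 * τ * ‖z‖ ^ 2 := by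
    intro z
    have cA : ⟪TA x, z⟫ ^ 2 ≤ a' * ⟪TA z, z⟫ := by
      have h := cs_psd hsymA hposA x z
      rw [← ha'] at h
      exact h
    have cB : ⟪TB y, z⟫ ^ 2 ≤ b' * ⟪TB z, z⟫ := by
      have h := cs_psd hsymB hposB y z
      rw [← hb'] at h
      exact h
    have e1 : ⟪s, z⟫ = sa⁻¹ * ⟪TA x, z⟫ := by
      rw [hs_def, real_inner_smul_left]
    have e2 : ⟪t, z⟫ = sb⁻¹ * ⟪TB y, z⟫ := by
      rw [ht_def, real_inner_smul_left]
    have b1 : ⟪s, z⟫ ^ 2 ≤ ⟪TA z, z⟫ := by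
      rw [e1, mul_pow, inv_pow, hsa2]
      calc a'⁻¹ * ⟪TA x, z⟫ ^ 2 ≤ a'⁻¹ * (a' * ⟪TA z, z⟫) :=
            mul_le_mul_of_nonneg_left cA (inv_nonneg.mpr ha.le)
        _ = ⟪TA z, z⟫ := by field_simp
    have b2 : ⟪t, z⟫ ^ 2 ≤ ⟪TB z, z⟫ := by
      rw [e2, mul_pow, inv_pow, hsb2]
      calc b'⁻¹ * ⟪TB y, z⟫ ^ 2 ≤ b'⁻¹ * (b' * ⟪TB z, z⟫) :=
            mul_le_mul_of_nonneg_left cB (inv_nonneg.mpr hb.le)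
        _ = ⟪TB z, z⟫ := by field_simp
    linarith [hsum z]
  have hss : ⟪s, s⟫ = ‖s‖ ^ 2 := real_inner_self_eq_norm_sq s
  have htt : ⟪t, t⟫ = ‖t‖ ^ 2 := real_inner_self_eq_norm_sq t
  have hts : ⟪t, s⟫ = ⟪s, t⟫ := (real_inner_comm t s).symm
  have F2 : (‖s‖ ^ 2) ^ 2 + ⟪s, t⟫ ^ 2 ≤ 2 * τ * ‖s‖ ^ 2 := by
    have h := P s
    rw [hss, hts] at h
    exact h
  have F3 : (‖t‖ ^ 2) ^ 2 + ⟪s, t⟫ ^ 2 ≤ 2 * τ * ‖t‖ ^ 2 := by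
    have h := P t
    rw [htt] at h
    linarith
  have hq : ∀ l : ℝ, 0 ≤ (2 * τ * ‖s‖ ^ 2 - (‖s‖ ^ 2) ^ 2 - ⟪s, t⟫ ^ 2) * (l * l)
      + (2 * ⟪s, t⟫ * (2 * τ - ‖s‖ ^ 2 - ‖t‖ ^ 2)) * l
      + (2 * τ * ‖t‖ ^ 2 - (‖t‖ ^ 2) ^ 2 - ⟪s, t⟫ ^ 2) := by
    intro l
    have h := P (l • s + t)
    have e1 : ⟪s, l • s + t⟫ = l * ‖s‖ ^ 2 + ⟪s, t⟫ := by
      rw [inner_add_right, real_inner_smul_right, hss]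
    have e2 : ⟪t, l • s + t⟫ = l * ⟪s, t⟫ + ‖t‖ ^ 2 := by
      rw [inner_add_right, real_inner_smul_right, htt, hts]
    have e3 : ‖l • s + t‖ ^ 2 = ‖s‖ ^ 2 * (l * l) + 2 * ⟪s, t⟫ * l + ‖t‖ ^ 2 := by
      rw [norm_add_sq_real, norm_smul, real_inner_smul_left]
      simp only [Real.norm_eq_abs, mul_pow, sq_abs]
      ring
    rw [e1, e2, e3] at h
    nlinarith [h]
  have hd := discrim_le_zero hq
  rw [discrim] at hd
  have F4 : ⟪s, t⟫ ^ 2 * (2 * τ - ‖s‖ ^ 2 - ‖t‖ ^ 2) ^ 2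
      ≤ (2 * τ * ‖s‖ ^ 2 - (‖s‖ ^ 2) ^ 2 - ⟪s, t⟫ ^ 2)
        * (2 * τ * ‖t‖ ^ 2 - (‖t‖ ^ 2) ^ 2 - ⟪s, t⟫ ^ 2) := by
    nlinarith [hd]
  have F1 : ⟪s, t⟫ ^ 2 ≤ ‖s‖ ^ 2 * ‖t‖ ^ 2 := by
    have h1 := abs_real_inner_le_norm s t
    have h2 := mul_self_le_mul_self (abs_nonneg ⟪s, t⟫) h1
    calc ⟪s, t⟫ ^ 2 = |⟪s, t⟫| * |⟪s, t⟫| := by rw [abs_mul_abs_self]; ring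
      _ ≤ (‖s‖ * ‖t‖) * (‖s‖ * ‖t‖) := h2
      _ = ‖s‖ ^ 2 * ‖t‖ ^ 2 := by ring
  have main : ⟪s, t⟫ ^ 2 * (‖s‖ ^ 2 * ‖t‖ ^ 2) ≤ τ ^ 4 := by
    refine scalar_key τ (‖s‖ ^ 2) (‖t‖ ^ 2) ⟪s, t⟫ hτ (sq_nonneg _) (sq_nonneg _) F1 ?_ ?_ ?_
    · linarith [F2]
    · linarith [F3]
    · nlinarith [F4]
  have hLHS : ⟪TB y, TA x⟫ = (sa * sb) * ⟪s, t⟫ := by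
    rw [hTAx, hTBy, real_inner_smul_left, real_inner_smul_right, hts]
    ring
  rcases le_or_gt ⟪s, t⟫ 0 with hγ | hγ
  · rw [hLHS]
    have : (sa * sb) * ⟪s, t⟫ ≤ 0 :=
      mul_nonpos_of_nonneg_of_nonpos (by positivity) hγ
    linarith
  · -- γ > 0
    have hsax : sa ≤ ‖s‖ * ‖x‖ := by
      have e : ⟪s, x⟫ = sa := by
        rw [hs_def, real_inner_smul_left, ← ha', ← hsa2]
        field_simp
      have h := real_inner_le_norm s x
      rw [e] at h
      exact h
    have hsby : sb ≤ ‖t‖ * ‖y‖ := by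
      have e : ⟪t, y⟫ = sb := by
        rw [ht_def, real_inner_smul_left, ← hb', ← hsb2]
        field_simp
      have h := real_inner_le_norm t y
      rw [e] at h
      exact h
    have hγst : ⟪s, t⟫ * (‖s‖ * ‖t‖) ≤ τ ^ 2 := by
      have h3 : 0 ≤ ⟪s, t⟫ * (‖s‖ * ‖t‖) := by positivity
      have h2 : (⟪s, t⟫ * (‖s‖ * ‖t‖)) ^ 2 ≤ (τ ^ 2) ^ 2 := by
        calc (⟪s, t⟫ * (‖s‖ * ‖t‖)) ^ 2 = ⟪s, t⟫ ^ 2 * (‖s‖ ^ 2 * ‖t‖ ^ 2) := by ring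
          _ ≤ τ ^ 4 := main
          _ = (τ ^ 2) ^ 2 := by ring
      calc ⟪s, t⟫ * (‖s‖ * ‖t‖) = Real.sqrt ((⟪s, t⟫ * (‖s‖ * ‖t‖)) ^ 2) :=
            (Real.sqrt_sq h3).symm
        _ ≤ Real.sqrt ((τ ^ 2) ^ 2) := Real.sqrt_le_sqrt h2
        _ = τ ^ 2 := Real.sqrt_sq (sq_nonneg τ)
    rw [hLHS]
    calc (sa * sb) * ⟪s, t⟫ ≤ ((‖s‖ * ‖x‖) * (‖t‖ * ‖y‖)) * ⟪s, t⟫ := by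
          apply mul_le_mul_of_nonneg_right _ hγ.le
          exact mul_le_mul hsax hsby hsb.le (by positivity)
      _ = (⟪s, t⟫ * (‖s‖ * ‖t‖)) * (‖x‖ * ‖y‖) := by ring
      _ ≤ τ ^ 2 * (‖x‖ * ‖y‖) := mul_le_mul_of_nonneg_right hγst (by positivity)

end Aux

set_option maxHeartbeats 1000000 in
/-- For positive semidefinite matrices `A` and `B`, `‖A * B‖ ≤ ‖(A + B) / 2‖ ^ 2`
in the operator norm. -/
theorem opNorm_mul_le_sq_opNorm_avg {d : ℕ} (A B : Matrix (Fin d) (Fin d) ℝ)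
    (hA : A.PosSemidef) (hB : B.PosSemidef) :
    opNorm (A * B) ≤ opNorm ((2 : ℝ)⁻¹ • (A + B)) ^ 2 := by
  classical
  set TA := Matrix.toEuclideanCLM (𝕜 := ℝ) (n := Fin d) A with hTA_def
  set TB := Matrix.toEuclideanCLM (𝕜 := ℝ) (n := Fin d) B with hTB_def
  set TM := Matrix.toEuclideanCLM (𝕜 := ℝ) (n := Fin d) ((2 : ℝ)⁻¹ • (A + B)) with hTM_def
  -- self-adjointness
  have hsaA : _root_.IsSelfAdjoint TA := by
    rw [_root_.IsSelfAdjoint, hTA_def, ← map_star]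
    congr 1
    exact hA.1
  have hsaB : _root_.IsSelfAdjoint TB := by
    rw [_root_.IsSelfAdjoint, hTB_def, ← map_star]
    congr 1
    exact hB.1
  have hsymA : ∀ x y : EuclideanSpace ℝ (Fin d), ⟪TA x, y⟫ = ⟪x, TA y⟫ := fun x y =>
    (ContinuousLinearMap.isSelfAdjoint_iff_isSymmetric.mp hsaA) x y
  have hsymB : ∀ x y : EuclideanSpace ℝ (Fin d), ⟪TB x, y⟫ = ⟪x, TB y⟫ := fun x y =>
    (ContinuousLinearMap.isSelfAdjoint_iff_isSymmetric.mp hsaB) x y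
  -- positivity
  have hposA : ∀ z : EuclideanSpace ℝ (Fin d), 0 ≤ ⟪TA z, z⟫ := by
    intro z
    have h := hA.dotProduct_mulVec_nonneg (WithLp.ofLp z)
    simp only [star_trivial] at h
    have e : ⟪TA z, z⟫ = dotProduct (A.mulVec (WithLp.ofLp z)) (WithLp.ofLp z) := by
      rw [EuclideanSpace.inner_eq_star_dotProduct, hTA_def, Matrix.ofLp_toEuclideanCLM, star_trivial, dotProduct_comm]
    rw [e, dotProduct_comm]
    exact h
  have hposB : ∀ z : EuclideanSpace ℝ (Fin d), 0 ≤ ⟪TB z, z⟫ := by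
    intro z
    have h := hB.dotProduct_mulVec_nonneg (WithLp.ofLp z)
    simp only [star_trivial] at h
    have e : ⟪TB z, z⟫ = dotProduct (B.mulVec (WithLp.ofLp z)) (WithLp.ofLp z) := by
      rw [EuclideanSpace.inner_eq_star_dotProduct, hTB_def, Matrix.ofLp_toEuclideanCLM, star_trivial, dotProduct_comm]
    rw [e, dotProduct_comm]
    exact h
  -- the sum bound
  have hTM : TM = (2 : ℝ)⁻¹ • (TA + TB) := by
    rw [hTM_def, hTA_def, hTB_def, _root_.map_smul, map_add]
  have hsum : ∀ z : EuclideanSpace ℝ (Fin d),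
      ⟪TA z, z⟫ + ⟪TB z, z⟫ ≤ 2 * ‖TM‖ * ‖z‖ ^ 2 := by
    intro z
    have e : ⟪TM z, z⟫ = 2⁻¹ * (⟪TA z, z⟫ + ⟪TB z, z⟫) := by
      rw [hTM]
      rw [ContinuousLinearMap.smul_apply, ContinuousLinearMap.add_apply,
        real_inner_smul_left, inner_add_left]
    have h1 : ⟪TM z, z⟫ ≤ ‖TM z‖ * ‖z‖ := real_inner_le_norm _ _
    have h2 : ‖TM z‖ ≤ ‖TM‖ * ‖z‖ := TM.le_opNorm z
    have h3 : ⟪TM z, z⟫ ≤ ‖TM‖ * ‖z‖ ^ 2 := by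
      nlinarith [norm_nonneg z, norm_nonneg (TM z)]
    nlinarith [e, h3]
  -- conclude
  have hkey := inner_le TA TB hsymA hposA hsymB hposB ‖TM‖ (norm_nonneg _) hsum
  have hgoal : opNorm (A * B) = ‖TA * TB‖ := by
    rw [opNorm, _root_.map_mul, hTA_def, hTB_def]
  have hRHSeq : opNorm ((2 : ℝ)⁻¹ • (A + B)) = ‖TM‖ := rfl
  rw [hgoal, hRHSeq]
  refine ContinuousLinearMap.opNorm_le_bound _ (by positivity) (fun yv => ?_)
  have hw_eq : (TA * TB) yv = TA (TB yv) := rfl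
  rw [hw_eq]
  set w := TA (TB yv) with hwdef
  rcases (norm_nonneg w).eq_or_lt with hw0 | hwpos
  · rw [← hw0]
    positivity
  · have h1 : ‖w‖ ^ 2 = ⟪TB yv, TA w⟫ := by
      rw [← real_inner_self_eq_norm_sq]
      calc ⟪w, w⟫ = ⟪TA (TB yv), w⟫ := by rw [← hwdef]
        _ = ⟪TB yv, TA w⟫ := hsymA (TB yv) w
    have h2 := hkey w yv
    nlinarith [h1, h2, hwpos]
end

section
/- For positive semidefinite matrices A and B, ‖(AB + BA)/2‖ ≤ ‖(A+B)/2‖². -/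
open Matrix

open scoped RealInnerProductSpace

/-- Norm bound for a symmetric operator from the quadratic form. -/
lemma norm_le_of_inner_le {E : Type*} [NormedAddCommGroup E] [InnerProductSpace ℝ E]
    (T : E →L[ℝ] E) (hT : ∀ x y : E, ⟪T x, y⟫ = ⟪x, T y⟫) {c : ℝ} (hc : 0 ≤ c)
    (h : ∀ x : E, |⟪T x, x⟫| ≤ c * ‖x‖ ^ 2) : ‖T‖ ≤ c := by
  refine T.opNorm_le_bound hc fun x => ?_
  rcases eq_or_ne (T x) 0 with h0 | h0
  · simp [h0, mul_nonneg hc (norm_nonneg x)]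
  rcases eq_or_ne x 0 with rfl | hx
  · simp
  have hxpos : (0:ℝ) < ‖x‖ := norm_pos_iff.mpr hx
  have hTxpos : (0:ℝ) < ‖T x‖ := norm_pos_iff.mpr h0
  set z : E := (‖x‖ / ‖T x‖) • T x with hz
  have hnz : ‖z‖ = ‖x‖ := by
    rw [hz, norm_smul, Real.norm_eq_abs, abs_div, abs_of_nonneg (norm_nonneg x),
      abs_of_nonneg (norm_nonneg _)]
    field_simp
  have hinner : ⟪T x, z⟫ = ‖x‖ * ‖T x‖ := by
    rw [hz, real_inner_smul_right, real_inner_self_eq_norm_sq]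
    field_simp
  have e1 : ⟪T (x + z), x + z⟫ - ⟪T (x - z), x - z⟫ = 4 * ⟪T x, z⟫ := by
    have h1 : ⟪T z, x⟫ = ⟪T x, z⟫ := by
      rw [hT z x, real_inner_comm]
    simp only [map_add, map_sub, inner_add_left, inner_add_right, inner_sub_left,
      inner_sub_right]
    linarith
  have par' : ‖x + z‖ ^ 2 + ‖x - z‖ ^ 2 = 4 * ‖x‖ ^ 2 := by
    have hp := parallelogram_law_with_norm ℝ x z
    rw [hnz] at hp
    simp only [pow_two]
    linarith
  have l1 : ⟪T (x + z), x + z⟫ ≤ c * ‖x + z‖ ^ 2 := (abs_le.mp (h (x + z))).2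
  have l2 : -(c * ‖x - z‖ ^ 2) ≤ ⟪T (x - z), x - z⟫ := (abs_le.mp (h (x - z))).1
  have hsum : 4 * ⟪T x, z⟫ ≤ c * (‖x + z‖ ^ 2 + ‖x - z‖ ^ 2) := by
    rw [← e1]
    have : c * (‖x + z‖ ^ 2 + ‖x - z‖ ^ 2) = c * ‖x + z‖ ^ 2 + c * ‖x - z‖ ^ 2 := by ring
    linarith
  rw [par', hinner] at hsum
  have key : ‖x‖ * ‖T x‖ ≤ ‖x‖ * (c * ‖x‖) := by
    have : c * (4 * ‖x‖ ^ 2) = 4 * (‖x‖ * (c * ‖x‖)) := by ring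
    linarith
  exact (mul_le_mul_iff_right₀ hxpos).mp key

/-- PSD matrices give nonnegative quadratic forms on Euclidean space. -/
lemma inner_toEuclideanCLM_nonneg {d : ℕ} {P : Matrix (Fin d) (Fin d) ℝ} (hP : P.PosSemidef)
    (x : EuclideanSpace ℝ (Fin d)) : 0 ≤ ⟪toEuclideanCLM (𝕜 := ℝ) P x, x⟫ := by
  have h := hP.dotProduct_mulVec_nonneg ((WithLp.equiv 2 _) x)
  have hx : ∀ i, (toEuclideanCLM (𝕜 := ℝ) P x) i = (P *ᵥ (WithLp.equiv 2 _) x) i := by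
    intro i
    have := congrFun (Matrix.ofLp_toEuclideanCLM (𝕜 := ℝ) (n := Fin d) P x) i
    exact this
  simp only [PiLp.inner_apply, RCLike.inner_apply, conj_trivial]
  simp only [star_trivial, dotProduct] at h
  calc (0:ℝ) ≤ ∑ i, ((WithLp.equiv 2 _) x) i * (P *ᵥ (WithLp.equiv 2 _) x) i := h
    _ = ∑ i, x i * (toEuclideanCLM (𝕜 := ℝ) P x) i := by
        refine Finset.sum_congr rfl fun i _ => ?_
        rw [hx i]; rfl

/-- The CLM of a Hermitian real matrix is symmetric. -/
lemma isSymmetric_toEuclideanCLM {d : ℕ} {P : Matrix (Fin d) (Fin d) ℝ} (hP : P.IsHermitian) :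
    ∀ x y : EuclideanSpace ℝ (Fin d),
      ⟪toEuclideanCLM (𝕜 := ℝ) P x, y⟫ = ⟪x, toEuclideanCLM (𝕜 := ℝ) P y⟫ := by
  have hstar : star P = P := by rw [Matrix.star_eq_conjTranspose]; exact hP
  have hsa : _root_.IsSelfAdjoint (toEuclideanCLM (𝕜 := ℝ) P) := by
    show star (toEuclideanCLM (𝕜 := ℝ) P) = toEuclideanCLM (𝕜 := ℝ) P
    rw [← map_star, hstar]
  exact fun x y => hsa.isSymmetric x y

/-- For positive semidefinite matrices `A` and `B`,
`‖(A * B + B * A) / 2‖ ≤ ‖(A + B) / 2‖ ^ 2` in the operator norm. -/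
theorem opNorm_symmetrized_prod_le_sq_opNorm_avg {d : ℕ} (A B : Matrix (Fin d) (Fin d) ℝ)
    (hA : A.PosSemidef) (hB : B.PosSemidef) :
    opNorm ((2 : ℝ)⁻¹ • (A * B + B * A)) ≤ opNorm ((2 : ℝ)⁻¹ • (A + B)) ^ 2 := by
  set Cm : Matrix (Fin d) (Fin d) ℝ := (2 : ℝ)⁻¹ • (A + B) with hCm
  set Dm : Matrix (Fin d) (Fin d) ℝ := (2 : ℝ)⁻¹ • (A - B) with hDm
  set Mm : Matrix (Fin d) (Fin d) ℝ := (2 : ℝ)⁻¹ • (A * B + B * A) with hMm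
  have hCD : Mm = Cm * Cm - Dm * Dm := by
    simp only [hCm, hDm, hMm, smul_mul_assoc, mul_smul_comm, mul_add, add_mul, mul_sub, sub_mul,
      smul_smul, smul_add, smul_sub]
    module
  have hCA : Cm + Dm = A := by simp only [hCm, hDm]; module
  have hCB : Cm - Dm = B := by simp only [hCm, hDm]; module
  set c := toEuclideanCLM (𝕜 := ℝ) Cm with hc
  set dd := toEuclideanCLM (𝕜 := ℝ) Dm with hdd
  have hCsym : Cm.IsHermitian := by
    show Cmᴴ = Cm
    rw [hCm, Matrix.conjTranspose_smul, Matrix.conjTranspose_add, hA.1.eq, hB.1.eq, star_trivial]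
  have hDsym : Dm.IsHermitian := by
    show Dmᴴ = Dm
    rw [hDm, Matrix.conjTranspose_smul, Matrix.conjTranspose_sub, hA.1.eq, hB.1.eq, star_trivial]
  have hc_sym := isSymmetric_toEuclideanCLM hCsym
  have hd_sym := isSymmetric_toEuclideanCLM hDsym
  have hpt : ∀ x : EuclideanSpace ℝ (Fin d), |⟪dd x, x⟫| ≤ ⟪c x, x⟫ := by
    intro x
    have h1 : 0 ≤ ⟪c x, x⟫ + ⟪dd x, x⟫ := by
      have := inner_toEuclideanCLM_nonneg hA x
      rw [← hCA, map_add] at this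
      simpa [inner_add_left] using this
    have h2 : 0 ≤ ⟪c x, x⟫ - ⟪dd x, x⟫ := by
      have := inner_toEuclideanCLM_nonneg hB x
      rw [← hCB, map_sub] at this
      simpa [inner_sub_left] using this
    rw [abs_le]; constructor <;> linarith
  have hcx_le : ∀ x : EuclideanSpace ℝ (Fin d), ⟪c x, x⟫ ≤ ‖c‖ * ‖x‖ ^ 2 := by
    intro x
    calc ⟪c x, x⟫ ≤ ‖c x‖ * ‖x‖ := real_inner_le_norm _ _
      _ ≤ (‖c‖ * ‖x‖) * ‖x‖ := mul_le_mul_of_nonneg_right (c.le_opNorm x) (norm_nonneg x)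
      _ = ‖c‖ * ‖x‖ ^ 2 := by ring
  have hd_le : ‖dd‖ ≤ ‖c‖ :=
    norm_le_of_inner_le dd hd_sym (norm_nonneg c) fun x => (hpt x).trans (hcx_le x)
  show ‖toEuclideanCLM (𝕜 := ℝ) Mm‖ ≤ ‖c‖ ^ 2
  have hM : toEuclideanCLM (𝕜 := ℝ) Mm = c * c - dd * dd := by
    rw [hCD, map_sub, _root_.map_mul, _root_.map_mul]
  rw [hM]
  refine norm_le_of_inner_le _ (fun x y => ?_) (by positivity) fun x => ?_
  · simp only [ContinuousLinearMap.sub_apply, ContinuousLinearMap.mul_apply,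
      inner_sub_left, inner_sub_right]
    rw [hc_sym (c x) y, hc_sym x (c y), hd_sym (dd x) y, hd_sym x (dd y)]
  · have e : ⟪(c * c - dd * dd) x, x⟫ = ‖c x‖ ^ 2 - ‖dd x‖ ^ 2 := by
      simp only [ContinuousLinearMap.sub_apply, ContinuousLinearMap.mul_apply, inner_sub_left]
      rw [hc_sym (c x) x, hd_sym (dd x) x, real_inner_self_eq_norm_sq, real_inner_self_eq_norm_sq]
    rw [e, abs_le]
    have hcx : ‖c x‖ ≤ ‖c‖ * ‖x‖ := c.le_opNorm x
    have hdx : ‖dd x‖ ≤ ‖dd‖ * ‖x‖ := dd.le_opNorm x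
    have hdx' : ‖dd x‖ ≤ ‖c‖ * ‖x‖ :=
      hdx.trans (mul_le_mul_of_nonneg_right hd_le (norm_nonneg x))
    constructor
    · nlinarith [norm_nonneg (c x), norm_nonneg (dd x), norm_nonneg x, norm_nonneg c]
    · nlinarith [norm_nonneg (c x), norm_nonneg (dd x), norm_nonneg x, norm_nonneg c]
end

section
/- For positive semidefinite matrices A and B, the matrix (1/4)A⁴ + (1/4)AB²A + (1/4)BA²B + (1/4)B⁴ − ((A+B)/2)⁴ is positive semidefinite. -/
open Matrix

lemma posSemidef_smul_aux {d : ℕ} {M : Matrix (Fin d) (Fin d) ℝ} (hM : M.PosSemidef)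
    {c : ℝ} (hc : 0 ≤ c) : (c • M).PosSemidef := by
  refine ⟨?_, fun x => ?_⟩
  · show (c • M)ᴴ = c • M
    rw [conjTranspose_smul, star_trivial, hM.1.eq]
  exact (hM.smul hc).2 x

/-- For positive semidefinite matrices `A` and `B`, the matrix
`(1/4)A⁴ + (1/4)AB²A + (1/4)BA²B + (1/4)B⁴ − ((A+B)/2)⁴` is positive semidefinite. -/
theorem posSemidef_wr_minus_am_pow_four {d : ℕ} (A B : Matrix (Fin d) (Fin d) ℝ)
    (hA : A.PosSemidef) (hB : B.PosSemidef) :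
    ((4 : ℝ)⁻¹ • A ^ 4 + (4 : ℝ)⁻¹ • (A * B ^ 2 * A) + (4 : ℝ)⁻¹ • (B * A ^ 2 * B)
      + (4 : ℝ)⁻¹ • B ^ 4 - ((2 : ℝ)⁻¹ • (A + B)) ^ 4).PosSemidef := by
  have key : ((4 : ℝ)⁻¹ • A ^ 4 + (4 : ℝ)⁻¹ • (A * B ^ 2 * A) + (4 : ℝ)⁻¹ • (B * A ^ 2 * B)
      + (4 : ℝ)⁻¹ • B ^ 4 - ((2 : ℝ)⁻¹ • (A + B)) ^ 4)
      = (8 : ℝ)⁻¹ • ((A - B) * (A ^ 2 + B ^ 2) * (A - B))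
        + (16 : ℝ)⁻¹ • ((A + B) * ((A - B) * (A - B)) * (A + B)) := by
    simp only [smul_pow]
    have h16 : ((2:ℝ)⁻¹)^4 = (16:ℝ)⁻¹ := by norm_num
    rw [h16]
    simp only [pow_succ, pow_zero, one_mul, mul_sub, sub_mul, mul_add, add_mul,
      smul_sub, smul_add, mul_assoc]
    module
  rw [key]
  have hD : (A - B)ᴴ = (A - B) := by
    simpa using (hA.isHermitian.sub hB.isHermitian).eq
  have hS : (A + B)ᴴ = (A + B) := by
    simpa using (hA.isHermitian.add hB.isHermitian).eq
  have h1 : ((A - B) * (A ^ 2 + B ^ 2) * (A - B)).PosSemidef := by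
    have := ((hA.pow 2).add (hB.pow 2)).conjTranspose_mul_mul_same (A - B)
    rwa [hD] at this
  have h2 : ((A + B) * ((A - B) * (A - B)) * (A + B)).PosSemidef := by
    have hDD : ((A - B) * (A - B)).PosSemidef := by
      have := Matrix.posSemidef_conjTranspose_mul_self (A - B)
      rwa [hD] at this
    have := hDD.conjTranspose_mul_mul_same (A + B)
    rwa [hS] at this
  exact (posSemidef_smul_aux h1 (by norm_num)).add (posSemidef_smul_aux h2 (by norm_num))
end

section
/- Maclaurin's inequality: for positive reals x₁,…,xₙ, letting s_k be the k-th elementary symmetric polynomial divided by C(n,k), the sequence s₁ ≥ s₂^{1/2} ≥ … ≥ sₙ^{1/n} is nonincreasing; in particular s₁ ≥ sₙ^{1/n} is the AM-GM inequality. -/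
open Finset

private noncomputable def macES {α : Type*} [DecidableEq α] (x : α → ℝ) (s : Finset α) (k : ℕ) : ℝ :=
  ∑ Ω ∈ s.powersetCard k, ∏ i ∈ Ω, x i

private noncomputable def macNS {α : Type*} [DecidableEq α] (x : α → ℝ) (s : Finset α) (k : ℕ) : ℝ :=
  ((s.card.choose k : ℝ))⁻¹ * macES x s k

variable {α : Type*} [DecidableEq α] (x : α → ℝ)

private lemma macES_zero (s : Finset α) : macES x s 0 = 1 := by
  simp [macES]

private lemma macES_of_gt {s : Finset α} {k : ℕ} (h : s.card < k) : macES x s k = 0 := by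
  simp [macES, Finset.powersetCard_eq_empty.2 h]

private lemma macES_insert {a : α} {s : Finset α} (h : a ∉ s) (k : ℕ) :
    macES x (insert a s) (k+1) = macES x s (k+1) + x a * macES x s k := by
  unfold macES
  have hinj : ∀ Ω₁ ∈ s.powersetCard k, ∀ Ω₂ ∈ s.powersetCard k,
      insert a Ω₁ = insert a Ω₂ → Ω₁ = Ω₂ := by
    intro Ω₁ h₁ Ω₂ h₂ he
    have n1 : a ∉ Ω₁ := fun hc => h ((Finset.mem_powersetCard.1 h₁).1 hc)
    have n2 : a ∉ Ω₂ := fun hc => h ((Finset.mem_powersetCard.1 h₂).1 hc)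
    rw [← Finset.erase_insert n1, ← Finset.erase_insert n2, he]
  rw [Finset.powersetCard_succ_insert h, Finset.sum_union]
  · congr 1
    rw [Finset.sum_image hinj, Finset.mul_sum]
    refine Finset.sum_congr rfl fun Ω hΩ => ?_
    have hΩs : Ω ⊆ s := (Finset.mem_powersetCard.1 hΩ).1
    have : a ∉ Ω := fun hc => h (hΩs hc)
    simp [Finset.prod_insert this]
  · rw [Finset.disjoint_left]
    rintro Ω hΩ hΩ'
    obtain ⟨Ω', hΩ', rfl⟩ := Finset.mem_image.1 hΩ'
    have := (Finset.mem_powersetCard.1 hΩ).1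
    exact h (this (by simp))

variable (hx : ∀ i, 0 < x i)
include hx

private lemma macES_pos {s : Finset α} {k : ℕ} (h : k ≤ s.card) : 0 < macES x s k := by
  apply Finset.sum_pos
  · intro Ω _
    exact Finset.prod_pos fun i _ => hx i
  · obtain ⟨t, hts, htc⟩ := Finset.exists_subset_card_eq h
    exact ⟨t, Finset.mem_powersetCard.2 ⟨hts, htc⟩⟩

private lemma macES_nonneg (s : Finset α) (k : ℕ) : 0 ≤ macES x s k :=
  Finset.sum_nonneg fun Ω _ => Finset.prod_nonneg fun i _ => (hx i).le

private lemma macNS_pos {s : Finset α} {k : ℕ} (h : k ≤ s.card) : 0 < macNS x s k := by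
  apply mul_pos _ (macES_pos x hx h)
  rw [inv_pos]
  exact_mod_cast Nat.choose_pos h

private lemma macNS_nonneg (s : Finset α) (k : ℕ) : 0 ≤ macNS x s k :=
  mul_nonneg (by positivity) (macES_nonneg x hx s k)

omit hx

private lemma macNS_zero (s : Finset α) : macNS x s 0 = 1 := by
  simp [macNS, macES_zero]

private lemma macNS_of_gt {s : Finset α} {k : ℕ} (h : s.card < k) : macNS x s k = 0 := by
  simp [macNS, macES_of_gt x h]

private lemma mac_choose_id1 {c t : ℕ} (h : t < c) :
    (c + 1) * Nat.choose c (t+1) = (c - t) * Nat.choose (c+1) (t+1) := by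
  obtain ⟨d, rfl⟩ : ∃ d, c = t + d := ⟨c - t, by omega⟩
  have hst : t + d - t = d := by omega
  have h1 := Nat.choose_succ_right_eq (t + d) t
  have h2 : Nat.choose (t + d + 1) (t + 1) =
      Nat.choose (t + d) t + Nat.choose (t + d) (t + 1) := Nat.choose_succ_succ _ _
  rw [hst] at h1 ⊢
  rw [h2]
  zify at h1 ⊢
  linarith [h1]

private lemma macNS_insert {a : α} {s : Finset α} (h : a ∉ s) (k : ℕ) :
    ((s.card + 1 : ℕ) : ℝ) * macNS x (insert a s) k =
      (((s.card + 1 : ℕ) : ℝ) - (k : ℝ)) * macNS x s k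
        + (k : ℝ) * x a * macNS x s (k - 1) := by
  have hcard : (insert a s).card = s.card + 1 := Finset.card_insert_of_notMem h
  obtain ⟨c, hc⟩ : ∃ c, s.card = c := ⟨s.card, rfl⟩
  rw [hc] at hcard
  match k with
  | 0 => simp [macNS_zero]
  | (t+1) =>
    simp only [Nat.add_sub_cancel]
    rcases le_or_gt (t+1) (c+1) with hk | hk
    · have ht : t ≤ c := by omega
      unfold macNS
      rw [hcard, hc, macES_insert x h]
      have hnzB : (Nat.choose (c+1) (t+1) : ℝ) ≠ 0 := by
        exact_mod_cast (Nat.choose_pos (by omega)).ne'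
      have hB : ((c+1 : ℕ) : ℝ) * ((Nat.choose (c+1) (t+1) : ℝ))⁻¹ =
          ((t+1 : ℕ) : ℝ) * ((Nat.choose c t : ℝ))⁻¹ := by
        have hnz2 : (Nat.choose c t : ℝ) ≠ 0 := by
          exact_mod_cast (Nat.choose_pos ht).ne'
        rw [← div_eq_mul_inv, ← div_eq_mul_inv, div_eq_div_iff hnzB hnz2]
        norm_cast
        rw [Nat.add_one_mul_choose_eq c t, mul_comm]
      have hA : ((c+1 : ℕ) : ℝ) * ((Nat.choose (c+1) (t+1) : ℝ))⁻¹ * macES x s (t+1) =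
          (((c+1 : ℕ) : ℝ) - ((t+1 : ℕ) : ℝ)) * ((Nat.choose c (t+1) : ℝ))⁻¹ *
            macES x s (t+1) := by
        rcases Nat.lt_or_ge t c with htc | htc
        · have hnz2 : (Nat.choose c (t+1) : ℝ) ≠ 0 := by
            exact_mod_cast (Nat.choose_pos (by omega : t + 1 ≤ c)).ne'
          have hid := mac_choose_id1 htc
          have hidR : ((c+1 : ℕ) : ℝ) * (Nat.choose c (t+1) : ℝ) =
              (((c+1 : ℕ) : ℝ) - ((t+1 : ℕ) : ℝ)) * (Nat.choose (c+1) (t+1) : ℝ) := by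
            have hcast : (((c+1 : ℕ) : ℝ) - ((t+1 : ℕ) : ℝ)) = ((c - t : ℕ) : ℝ) := by
              push_cast [Nat.cast_sub (le_of_lt htc)]
              ring
            rw [hcast]
            exact_mod_cast hid
          have e1 : ((c+1 : ℕ) : ℝ) * ((Nat.choose (c+1) (t+1) : ℝ))⁻¹ =
              (((c+1 : ℕ) : ℝ) - ((t+1 : ℕ) : ℝ)) * ((Nat.choose c (t+1) : ℝ))⁻¹ := by
            rw [← div_eq_mul_inv, ← div_eq_mul_inv, div_eq_div_iff hnzB hnz2]
            exact hidR
          rw [e1]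
        · have hteq : t = c := by omega
          have hlt : s.card < t + 1 := by omega
          rw [macES_of_gt x hlt]
          ring
      push_cast at hA hB ⊢
      linear_combination hA + (x a * macES x s t) * hB
    · have h1 : macNS x (insert a s) (t+1) = 0 := by
        apply macNS_of_gt
        omega
      have h2 : macNS x s (t+1) = 0 := macNS_of_gt x (by omega)
      have h3 : macNS x s t = 0 := macNS_of_gt x (by omega)
      rw [h1, h2, h3]
      ring

include hx
private lemma mac_newton (s : Finset α) : ∀ k : ℕ,
    macNS x s k * macNS x s (k+2) ≤ macNS x s (k+1)^2 := by
  induction s using Finset.induction_on with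
  | empty =>
    intro k
    rw [macNS_of_gt x (by simp : (∅ : Finset α).card < k + 2), mul_zero]
    positivity
  | @insert a s ha ih =>
    intro k
    have hcard : (insert a s).card = s.card + 1 := Finset.card_insert_of_notMem ha
    rcases le_or_gt (k+2) (s.card+1) with hk | hk
    · -- main case
      have hk1 : k + 1 ≤ s.card := by omega
      set B1 := macNS x s (k-1) with hB1def
      set B2 := macNS x s k with hB2def
      set B3 := macNS x s (k+1) with hB3def
      set B4 := macNS x s (k+2) with hB4def
      have pB1 : 0 < B1 := macNS_pos x hx (by omega)
      have pB2 : 0 < B2 := macNS_pos x hx (by omega)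
      have pB3 : 0 < B3 := macNS_pos x hx (by omega)
      have pB4 : 0 ≤ B4 := macNS_nonneg x hx s (k+2)
      have pa : 0 < x a := hx a
      set q : ℝ := ((s.card + 1 : ℕ) : ℝ) - (k : ℝ) - 2 with hq
      have hq0 : 0 ≤ q := by
        rw [hq]
        push_cast
        have : (k:ℝ) + 2 ≤ (s.card:ℝ) + 1 := by exact_mod_cast hk
        linarith
      have ih2 : B2 * B4 ≤ B3^2 := ih k
      have h1 : 0 ≤ (k:ℝ) * ((k:ℝ)+2) * (x a)^2 * (B2^2 - B1 * B3) := by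
        match k with
        | 0 => simp
        | (j+1) =>
          have hj : B1 * B3 ≤ B2^2 := by
            have := ih j
            simpa [hB1def, hB2def, hB3def, Nat.add_sub_cancel] using this
          have : (0:ℝ) ≤ B2^2 - B1 * B3 := by linarith
          positivity
      have h3 : 0 ≤ (x a) * (k:ℝ) * q * (B2 * B3 - B1 * B4) := by
        match k with
        | 0 => simp
        | (j+1) =>
          have hj : B1 * B3 ≤ B2^2 := by
            have := ih j
            simpa [hB1def, hB2def, hB3def, Nat.add_sub_cancel] using this
          have hbb : B1 * B4 ≤ B2 * B3 := by
            nlinarith [mul_le_mul hj ih2 (by positivity) (by positivity),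
              mul_pos pB2 pB3]
          have : (0:ℝ) ≤ B2 * B3 - B1 * B4 := by linarith
          positivity
      have h2 : 0 ≤ q * (q+2) * (B3^2 - B2 * B4) := by
        have : (0:ℝ) ≤ B3^2 - B2 * B4 := by linarith
        positivity
      have r0 := macNS_insert x ha k
      have r1 := macNS_insert x ha (k+1)
      have r2 := macNS_insert x ha (k+2)
      simp only [Nat.add_sub_cancel] at r1 r2
      have hm : (0:ℝ) < ((s.card + 1 : ℕ) : ℝ) := by positivity
      have key : (((s.card+1:ℕ):ℝ) * macNS x (insert a s) k) *
          (((s.card+1:ℕ):ℝ) * macNS x (insert a s) (k+2)) ≤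
          (((s.card+1:ℕ):ℝ) * macNS x (insert a s) (k+1))^2 := by
        rw [r0, r1, r2]
        have hM : ((s.card + 1 : ℕ) : ℝ) = q + (k:ℝ) + 2 := by
          rw [hq]; push_cast; ring
        rw [hM]
        have expand : ((q + (k:ℝ) + 2 - ((k:ℝ)+1)) * B3 + ((k:ℝ)+1) * x a * B2)^2
            - ((q + (k:ℝ) + 2 - (k:ℝ)) * B2 + (k:ℝ) * x a * B1)
              * ((q + (k:ℝ) + 2 - ((k:ℝ)+2)) * B4 + ((k:ℝ)+2) * x a * B3)
            = (k:ℝ) * ((k:ℝ)+2) * (x a)^2 * (B2^2 - B1 * B3)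
              + q * (q+2) * (B3^2 - B2 * B4)
              + (x a) * (k:ℝ) * q * (B2 * B3 - B1 * B4)
              + (x a * B2 - B3)^2 := by ring
        push_cast
        push_cast at expand
        linarith [h1, h2, h3, sq_nonneg (x a * B2 - B3), expand]
      have key2 : ((s.card+1:ℕ):ℝ)^2 * (macNS x (insert a s) k * macNS x (insert a s) (k+2)) ≤
          ((s.card+1:ℕ):ℝ)^2 * (macNS x (insert a s) (k+1)^2) := by
        linarith [key]
      exact le_of_mul_le_mul_left key2 (by positivity)
    · rw [macNS_of_gt x (by omega : (insert a s).card < k + 2), mul_zero]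
      positivity

private lemma mac_consec (s : Finset α) : ∀ k : ℕ, 1 ≤ k → k + 1 ≤ s.card →
    macNS x s (k+1) ^ k ≤ macNS x s k ^ (k+1) := by
  intro k
  induction k with
  | zero => omega
  | succ j ihj =>
    intro _ hkn
    rcases Nat.eq_zero_or_pos j with rfl | hj
    · have h := mac_newton x hx s 0
      simpa [macNS_zero] using h
    · have ihx := ihj hj (by omega)
      have hnewt := mac_newton x hx s j
      have pj : 0 < macNS x s j := macNS_pos x hx (by omega)
      have pj1 : 0 < macNS x s (j+1) := macNS_pos x hx (by omega)
      have pj2 : 0 ≤ macNS x s (j+2) := macNS_nonneg x hx s (j+2)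
      have step1 : (macNS x s j * macNS x s (j+2)) ^ (j+1) ≤
          (macNS x s (j+1)^2) ^ (j+1) :=
        pow_le_pow_left₀ (by positivity) hnewt (j+1)
      have step2 : macNS x s (j+1) ^ (2*(j+1)) =
          macNS x s (j+1) ^ (j+2) * macNS x s (j+1) ^ j := by
        rw [← pow_add]
        congr 1
        omega
      have step3 : macNS x s (j+1) ^ (j+2) * macNS x s (j+1) ^ j ≤
          macNS x s (j+1) ^ (j+2) * macNS x s j ^ (j+1) :=
        mul_le_mul_of_nonneg_left ihx (by positivity)
      have step4 : macNS x s (j+2) ^ (j+1) * macNS x s j ^ (j+1) ≤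
          macNS x s (j+1) ^ (j+2) * macNS x s j ^ (j+1) := by
        calc macNS x s (j+2) ^ (j+1) * macNS x s j ^ (j+1)
            = (macNS x s j * macNS x s (j+2)) ^ (j+1) := by rw [mul_pow]; ring
          _ ≤ (macNS x s (j+1)^2) ^ (j+1) := step1
          _ = macNS x s (j+1) ^ (2*(j+1)) := by rw [← pow_mul]
          _ = macNS x s (j+1) ^ (j+2) * macNS x s (j+1) ^ j := step2
          _ ≤ _ := step3
      exact le_of_mul_le_mul_right step4 (by positivity)

private lemma mac_chain (s : Finset α) {k : ℕ} (hk : 1 ≤ k) :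
    ∀ l : ℕ, k ≤ l → l ≤ s.card → macNS x s l ^ k ≤ macNS x s k ^ l := by
  intro l
  induction l with
  | zero => intro h1 _; omega
  | succ m ihm =>
    intro hkl hl
    rcases eq_or_lt_of_le hkl with rfl | hlt
    · exact le_refl _
    · have hkm : k ≤ m := by omega
      have hm1 : 1 ≤ m := le_trans hk hkm
      have ih := ihm hkm (by omega)
      have hcons := mac_consec x hx s m hm1 hl
      have pm : 0 < macNS x s m := macNS_pos x hx (by omega)
      have pm1 : 0 < macNS x s (m+1) := macNS_pos x hx (by omega)
      have pk : 0 < macNS x s k := macNS_pos x hx (by omega)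
      have big : (macNS x s (m+1) ^ k) ^ m ≤ (macNS x s k ^ (m+1)) ^ m := by
        calc (macNS x s (m+1) ^ k) ^ m = (macNS x s (m+1) ^ m) ^ k := by
              rw [← pow_mul, ← pow_mul, Nat.mul_comm]
          _ ≤ (macNS x s m ^ (m+1)) ^ k := pow_le_pow_left₀ (by positivity) hcons k
          _ = (macNS x s m ^ k) ^ (m+1) := by rw [← pow_mul, ← pow_mul, Nat.mul_comm]
          _ ≤ (macNS x s k ^ m) ^ (m+1) := pow_le_pow_left₀ (by positivity) ih (m+1)
          _ = (macNS x s k ^ (m+1)) ^ m := by rw [← pow_mul, ← pow_mul, Nat.mul_comm]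
      exact le_of_pow_le_pow_left₀ (by omega) (by positivity) big

omit hx

/-- Maclaurin's inequalities: for positive reals `x₁, …, xₙ`, with
`s k = (1/C(n,k)) Σ_{|Ω|=k} ∏_{i∈Ω} xᵢ`, the sequence `k ↦ s k ^ (1/k)` is
nonincreasing for `1 ≤ k ≤ n`. -/
theorem maclaurin_inequalities (n : ℕ) (x : Fin n → ℝ) (hx : ∀ i, 0 < x i)
    (s : ℕ → ℝ)
    (hs : ∀ k, s k = ((n.choose k : ℝ))⁻¹ *
      ∑ Ω ∈ Finset.univ.powersetCard k, ∏ i ∈ Ω, x i) :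
    ∀ k l : ℕ, 1 ≤ k → k ≤ l → l ≤ n →
      (s l) ^ ((l : ℝ)⁻¹) ≤ (s k) ^ ((k : ℝ)⁻¹) := by
  have hcard : (Finset.univ : Finset (Fin n)).card = n := by simp
  have hsN : ∀ k, s k = macNS x Finset.univ k := by
    intro k
    rw [hs k]
    unfold macNS macES
    rw [hcard]
  intro k l hk hkl hln
  have hpl : 0 < s l := by rw [hsN]; exact macNS_pos x hx (by omega)
  have hpk : 0 < s k := by rw [hsN]; exact macNS_pos x hx (by omega)
  have hchain : s l ^ k ≤ s k ^ l := by
    rw [hsN l, hsN k]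
    exact mac_chain x hx Finset.univ hk l hkl (by omega)
  have hk0 : (k:ℝ) ≠ 0 := Nat.cast_ne_zero.2 (by omega)
  have hl0 : (l:ℝ) ≠ 0 := Nat.cast_ne_zero.2 (by omega)
  have hA : 0 < s l ^ ((l:ℝ)⁻¹) := Real.rpow_pos_of_pos hpl _
  have hB : 0 < s k ^ ((k:ℝ)⁻¹) := Real.rpow_pos_of_pos hpk _
  have e1 : (s l ^ ((l:ℝ)⁻¹)) ^ (k*l : ℕ) = s l ^ k := by
    rw [← Real.rpow_natCast (s l ^ ((l:ℝ)⁻¹)) (k*l), ← Real.rpow_mul hpl.le]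
    rw [show (l:ℝ)⁻¹ * ((k*l : ℕ) : ℝ) = ((k:ℕ):ℝ) by push_cast; field_simp]
    exact Real.rpow_natCast _ k
  have e2 : (s k ^ ((k:ℝ)⁻¹)) ^ (k*l : ℕ) = s k ^ l := by
    rw [← Real.rpow_natCast (s k ^ ((k:ℝ)⁻¹)) (k*l), ← Real.rpow_mul hpk.le]
    rw [show (k:ℝ)⁻¹ * ((k*l : ℕ) : ℝ) = ((l:ℕ):ℝ) by push_cast; field_simp]
    exact Real.rpow_natCast _ l
  have : (s l ^ ((l:ℝ)⁻¹)) ^ (k*l : ℕ) ≤ (s k ^ ((k:ℝ)⁻¹)) ^ (k*l : ℕ) := by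
    rw [e1, e2]; exact hchain
  exact le_of_pow_le_pow_left₀ (Nat.mul_ne_zero (by omega) (by omega)) hB.le this
end

section
/- For positive reals a₁,…,aₙ and any k ≤ n, the average of products over k-subsets satisfies (1/C(n,k)) Σ_{|Ω|=k} ∏_{i∈Ω} a_i ≤ ((1/n) Σᵢ aᵢ)^k. -/
open Finset

private lemma identity1 {n : ℕ} (a : Fin n → ℝ) (k : ℕ) :
    ((k + 1 : ℕ) : ℝ) * ∑ Ω ∈ univ.powersetCard (k+1), ∏ i ∈ Ω, a i
      = ∑ Ω ∈ univ.powersetCard k, ∑ j ∈ univ \ Ω, a j * ∏ i ∈ Ω, a i := by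
  rw [Finset.mul_sum]
  have h1 : ∀ Ω ∈ univ.powersetCard (k+1),
      ((k + 1 : ℕ) : ℝ) * ∏ i ∈ Ω, a i = ∑ j ∈ Ω, ∏ i ∈ Ω, a i := by
    intro Ω hΩ
    rw [Finset.sum_const, Finset.mem_powersetCard_univ.mp hΩ, nsmul_eq_mul]
  rw [Finset.sum_congr rfl h1, Finset.sum_sigma', Finset.sum_sigma']
  refine Finset.sum_nbij' (fun p => ⟨p.1.erase p.2, p.2⟩)
    (fun p => ⟨insert p.2 p.1, p.2⟩) ?_ ?_ ?_ ?_ ?_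
  · rintro ⟨Ω, j⟩ hp
    simp only [Finset.mem_sigma, Finset.mem_powersetCard_univ] at hp ⊢
    obtain ⟨hcard, hj⟩ := hp
    constructor
    · rw [Finset.card_erase_of_mem hj, hcard]; omega
    · simp [Finset.mem_sdiff, Finset.notMem_erase]
  · rintro ⟨Ω, j⟩ hp
    simp only [Finset.mem_sigma, Finset.mem_powersetCard_univ, Finset.mem_sdiff] at hp ⊢
    obtain ⟨hcard, _, hj⟩ := hp
    constructor
    · rw [Finset.card_insert_of_notMem hj, hcard]
    · exact Finset.mem_insert_self _ _
  · rintro ⟨Ω, j⟩ hp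
    simp only [Finset.mem_sigma, Finset.mem_powersetCard_univ] at hp
    simp [Finset.insert_erase hp.2]
  · rintro ⟨Ω, j⟩ hp
    simp only [Finset.mem_sigma, Finset.mem_powersetCard_univ, Finset.mem_sdiff] at hp
    simp [Finset.erase_insert hp.2.2]
  · rintro ⟨Ω, j⟩ hp
    simp only [Finset.mem_sigma, Finset.mem_powersetCard_univ] at hp
    simp only []
    rw [← Finset.mul_prod_erase Ω a hp.2]

private lemma key_ineq {n : ℕ} (a : Fin n → ℝ) (ha : ∀ i, 0 ≤ a i) (k : ℕ) :
    (k : ℝ) * (∑ i, a i) * (∑ Ω ∈ univ.powersetCard k, ∏ i ∈ Ω, a i)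
      ≤ (n : ℝ) * ∑ Ω ∈ univ.powersetCard k, (∏ i ∈ Ω, a i) * ∑ i ∈ Ω, a i := by
  have hD : (n : ℝ) * (∑ Ω ∈ univ.powersetCard k, (∏ i ∈ Ω, a i) * ∑ i ∈ Ω, a i)
      - (k : ℝ) * (∑ i, a i) * (∑ Ω ∈ univ.powersetCard k, ∏ i ∈ Ω, a i)
      = ∑ Ω ∈ univ.powersetCard k, ∑ i ∈ Ω, ∑ j : Fin n,
          (∏ i ∈ Ω, a i) * (a i - a j) := by
    rw [Finset.mul_sum, Finset.mul_sum, ← Finset.sum_sub_distrib]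
    refine Finset.sum_congr rfl fun Ω hΩ => ?_
    have hcard : Ω.card = k := Finset.mem_powersetCard_univ.mp hΩ
    simp only [mul_sub, Finset.sum_sub_distrib, Finset.sum_const, Finset.card_univ,
      Fintype.card_fin]
    simp only [nsmul_eq_mul, hcard, ← Finset.mul_sum]
    ring
  -- split the inner j-sum over Ω and its complement; the j ∈ Ω part vanishes
  have hsplit : ∀ Ω ∈ univ.powersetCard k,
      ∑ i ∈ Ω, ∑ j : Fin n, (∏ i ∈ Ω, a i) * (a i - a j)
        = ∑ i ∈ Ω, ∑ j ∈ univ \ Ω, (∏ i ∈ Ω, a i) * (a i - a j) := by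
    intro Ω _
    have h0 : ∑ j ∈ Ω, ∑ i ∈ Ω, (∏ i ∈ Ω, a i) * (a i - a j) = 0 := by
      simp only [mul_sub, Finset.sum_sub_distrib, Finset.sum_const, nsmul_eq_mul,
        ← Finset.mul_sum]
      ring
    have hsd := Finset.sum_sdiff (f := fun j => ∑ i ∈ Ω, (∏ i ∈ Ω, a i) * (a i - a j))
      (Finset.subset_univ Ω)
    rw [Finset.sum_comm, ← hsd, h0, add_zero, Finset.sum_comm]
  rw [Finset.sum_congr rfl hsplit] at hD
  -- now show the triple sum is nonnegative via the swap involution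
  set T := (univ.powersetCard k).sigma (fun Ω : Finset (Fin n) => Ω ×ˢ (univ \ Ω)) with hT
  set f : (Σ _ : Finset (Fin n), Fin n × Fin n) → ℝ :=
    fun p => (∏ i ∈ p.1, a i) * (a p.2.1 - a p.2.2) with hf
  set σ : (Σ _ : Finset (Fin n), Fin n × Fin n) → (Σ _ : Finset (Fin n), Fin n × Fin n) :=
    fun p => ⟨insert p.2.2 (p.1.erase p.2.1), (p.2.2, p.2.1)⟩ with hσ
  have hTmem : ∀ p ∈ T, p.2.1 ∈ p.1 ∧ p.2.2 ∉ p.1 ∧ p.1.card = k := by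
    rintro ⟨Ω, i, j⟩ hp
    simp only [hT, Finset.mem_sigma, Finset.mem_powersetCard_univ, Finset.mem_product,
      Finset.mem_sdiff] at hp
    exact ⟨hp.2.1, hp.2.2.2, hp.1⟩
  have hσT : ∀ p ∈ T, σ p ∈ T := by
    rintro ⟨Ω, i, j⟩ hp
    obtain ⟨hi, hj, hc⟩ := hTmem _ hp
    simp only [hT, hσ, Finset.mem_sigma, Finset.mem_powersetCard_univ, Finset.mem_product,
      Finset.mem_sdiff]
    have hji : j ∉ Ω.erase i := fun h => hj (Finset.mem_of_mem_erase h)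
    refine ⟨?_, Finset.mem_insert_self _ _, Finset.mem_univ _, ?_⟩
    · rw [Finset.card_insert_of_notMem hji, Finset.card_erase_of_mem hi, hc]
      have : 0 < k := by
        rw [← hc]; exact Finset.card_pos.mpr ⟨i, hi⟩
      omega
    · simp only [Finset.mem_insert, not_or]
      refine ⟨fun h => hj (h ▸ hi), Finset.notMem_erase _ _⟩
  have hσσ : ∀ p ∈ T, σ (σ p) = p := by
    rintro ⟨Ω, i, j⟩ hp
    obtain ⟨hi, hj, _⟩ := hTmem _ hp
    have hji : j ∉ Ω.erase i := fun h => hj (Finset.mem_of_mem_erase h)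
    simp only [hσ]
    congr 1
    rw [Finset.erase_insert hji, Finset.insert_erase hi]
  have hswap : ∑ p ∈ T, f p = ∑ p ∈ T, f (σ p) :=
    Finset.sum_nbij' σ σ hσT (fun p hp => by
      have := hσT p hp; have h2 := hσσ p hp; rw [← h2] at hp ⊢; exact hσT _ (h2 ▸ hp))
      hσσ hσσ (fun p hp => by rw [hσσ p hp])
  have hprod : ∀ Ω ∈ univ.powersetCard k,
      ∑ i ∈ Ω, ∑ j ∈ univ \ Ω, (∏ i ∈ Ω, a i) * (a i - a j)
        = ∑ q ∈ Ω ×ˢ (univ \ Ω), (∏ i ∈ Ω, a i) * (a q.1 - a q.2) := by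
    intro Ω _
    exact (Finset.sum_product' (s := Ω) (t := univ \ Ω)
      (f := fun i j => (∏ i ∈ Ω, a i) * (a i - a j))).symm
  rw [Finset.sum_congr rfl hprod] at hD
  have hfT : ∑ p ∈ T, f p
      = ∑ Ω ∈ univ.powersetCard k, ∑ q ∈ Ω ×ˢ (univ \ Ω), (∏ i ∈ Ω, a i) * (a q.1 - a q.2) :=
    Finset.sum_sigma _ _ _
  have h2 : 0 ≤ 2 * ∑ p ∈ T, f p := by
    have h3 : 2 * ∑ p ∈ T, f p = ∑ p ∈ T, (f p + f (σ p)) := by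
      rw [Finset.sum_add_distrib, ← hswap]; ring
    rw [h3]
    refine Finset.sum_nonneg fun p hp => ?_
    obtain ⟨hi, hj, _⟩ := hTmem p hp
    have hji : p.2.2 ∉ p.1.erase p.2.1 := fun h => hj (Finset.mem_of_mem_erase h)
    have key : f p + f (σ p)
        = (a p.2.1 - a p.2.2) ^ 2 * ∏ i ∈ p.1.erase p.2.1, a i := by
      simp only [hf, hσ]
      rw [Finset.prod_insert hji, ← Finset.mul_prod_erase p.1 a hi]
      ring
    rw [key]
    exact mul_nonneg (sq_nonneg _) (Finset.prod_nonneg fun i _ => ha i)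
  linarith [hD, h2, hfT]

private lemma main_aux {n : ℕ} (a : Fin n → ℝ) (ha : ∀ i, 0 ≤ a i) :
    ∀ k, k ≤ n → ((n.choose k : ℝ))⁻¹ * ∑ Ω ∈ univ.powersetCard k, ∏ i ∈ Ω, a i ≤
      ((n : ℝ)⁻¹ * ∑ i, a i) ^ k := by
  intro k
  induction k with
  | zero => simp
  | succ k ih =>
    intro hk1
    have hk : k ≤ n := by omega
    have hkn : k < n := hk1
    have hn : 0 < n := by omega
    have hS : 0 ≤ ∑ i, a i := Finset.sum_nonneg fun i _ => ha i
    have hE : ∀ m, 0 ≤ ∑ Ω ∈ univ.powersetCard m, ∏ i ∈ Ω, a i := fun m =>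
      Finset.sum_nonneg fun Ω _ => Finset.prod_nonneg fun i _ => ha i
    set S := ∑ i, a i with hSdef
    set E0 := ∑ Ω ∈ univ.powersetCard k, ∏ i ∈ Ω, a i with hE0
    set E1 := ∑ Ω ∈ univ.powersetCard (k+1), ∏ i ∈ Ω, a i with hE1
    set Q := ∑ Ω ∈ univ.powersetCard k, (∏ i ∈ Ω, a i) * ∑ i ∈ Ω, a i with hQ
    -- identity : (k+1) E1 = S * E0 - Q
    have hid : ((k + 1 : ℕ) : ℝ) * E1 = S * E0 - Q := by
      rw [hE1, identity1 a k]
      rw [hQ, hE0, Finset.mul_sum, ← Finset.sum_sub_distrib]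
      refine Finset.sum_congr rfl fun Ω hΩ => ?_
      have hsub : ∑ j ∈ univ \ Ω, a j = S - ∑ j ∈ Ω, a j := by
        rw [hSdef, eq_sub_iff_add_eq, Finset.sum_sdiff (Finset.subset_univ Ω)]
      rw [← Finset.sum_mul, hsub]
      ring
    have hKI : (k : ℝ) * S * E0 ≤ (n : ℝ) * Q := key_ineq a ha k
    -- hence n (k+1) E1 ≤ (n - k) S E0
    have hstep : (n : ℝ) * (((k+1 : ℕ)) : ℝ) * E1 ≤ ((n : ℝ) - k) * (S * E0) := by
      nlinarith [hid]
    -- choose identity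
    have hch : ((k + 1 : ℕ) : ℝ) * (n.choose (k+1) : ℝ) = ((n : ℝ) - k) * (n.choose k : ℝ) := by
      have h := Nat.choose_succ_right_eq n k
      have hcast : ((n.choose (k+1) * (k+1) : ℕ) : ℝ) = ((n.choose k * (n - k) : ℕ) : ℝ) := by
        rw [h]
      push_cast [Nat.cast_sub hk] at hcast ⊢
      linarith [hcast]
    have hC0 : (0 : ℝ) < (n.choose k : ℝ) := by
      exact_mod_cast Nat.choose_pos hk
    have hC1 : (0 : ℝ) < (n.choose (k+1) : ℝ) := by
      exact_mod_cast Nat.choose_pos hk1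
    have hnk : (0 : ℝ) < (n : ℝ) - k := by
      have : (k : ℝ) < n := by exact_mod_cast hkn
      linarith
    have hnR : (0 : ℝ) < (n : ℝ) := by exact_mod_cast hn
    -- main chain
    have hmain' : (n : ℝ) * E1 * (n.choose k : ℝ) ≤ S * E0 * (n.choose (k+1) : ℝ) := by
      have h1 := mul_le_mul_of_nonneg_right hstep hC1.le
      have h2 : (n : ℝ) * ((k + 1 : ℕ) : ℝ) * E1 * (n.choose (k+1) : ℝ)
          = ((n : ℝ) - k) * ((n : ℝ) * E1 * (n.choose k : ℝ)) := by
        linear_combination ((n : ℝ) * E1) * hch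
      have h3 : ((n : ℝ) - k) * ((n : ℝ) * E1 * (n.choose k : ℝ))
          ≤ ((n : ℝ) - k) * (S * E0 * (n.choose (k+1) : ℝ)) := by nlinarith [h1, h2]
      exact le_of_mul_le_mul_left h3 hnk
    have hmain : ((n.choose (k+1) : ℝ))⁻¹ * E1 ≤ (n : ℝ)⁻¹ * S * (((n.choose k : ℝ))⁻¹ * E0) := by
      have hr : (n : ℝ)⁻¹ * S * (((n.choose k : ℝ))⁻¹ * E0)
          = S * E0 / ((n : ℝ) * (n.choose k : ℝ)) := by
        rw [div_eq_mul_inv, mul_inv]; ring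
      rw [inv_mul_eq_div, hr, div_le_div_iff₀ hC1 (by positivity)]
      nlinarith [hmain']
    calc ((n.choose (k+1) : ℝ))⁻¹ * E1 ≤ (n : ℝ)⁻¹ * S * (((n.choose k : ℝ))⁻¹ * E0) := hmain
      _ ≤ (n : ℝ)⁻¹ * S * ((n : ℝ)⁻¹ * S) ^ k := by
          refine mul_le_mul_of_nonneg_left (ih hk) ?_
          positivity
      _ = ((n : ℝ)⁻¹ * S) ^ (k+1) := by ring

/-- For nonnegative reals `a₁, …, aₙ` and `k ≤ n`, the average of products over
`k`-subsets is at most the `k`-th power of the arithmetic mean: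
`(1/C(n,k)) Σ_{|Ω|=k} ∏_{i∈Ω} aᵢ ≤ ((1/n) Σᵢ aᵢ) ^ k`. -/
theorem avg_subset_prod_le_pow_mean (n k : ℕ) (hk : k ≤ n) (a : Fin n → ℝ)
    (ha : ∀ i, 0 ≤ a i) :
    ((n.choose k : ℝ))⁻¹ * ∑ Ω ∈ Finset.univ.powersetCard k, ∏ i ∈ Ω, a i ≤
      ((n : ℝ)⁻¹ * ∑ i, a i) ^ k :=
  main_aux a ha k hk
end

section
/- If A₁,…,Aₙ are simultaneously diagonalizable positive semidefinite matrices (pairwise commuting), then the operator norm of the without-replacement average of products of k distinct matrices is at most the operator norm of ((1/n)ΣᵢAᵢ)^k. -/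
open Matrix Finset

namespace CommAMGM

variable {d : ℕ}

private lemma conj_pow {U D V : Matrix (Fin d) (Fin d) ℝ} (hUV : U * V = 1) (hVU : V * U = 1)
    (m : ℕ) : (U * D * V) ^ m = U * D ^ m * V := by
  induction m with
  | zero => simpa using hUV.symm
  | succ m ih =>
      rw [pow_succ, ih, pow_succ]
      calc U * D ^ m * V * (U * D * V) = U * D ^ m * (V * U) * D * V := by
            simp only [Matrix.mul_assoc]
      _ = U * (D ^ m * D) * V := by rw [hVU]; simp only [Matrix.mul_assoc, Matrix.mul_one]
      _ = _ := by simp only [Matrix.mul_assoc]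

private lemma aeval_conj {U D V : Matrix (Fin d) (Fin d) ℝ} (hUV : U * V = 1) (hVU : V * U = 1)
    (p : Polynomial ℝ) :
    Polynomial.aeval (U * D * V) p = U * Polynomial.aeval D p * V := by
  induction p using Polynomial.induction_on' with
  | add p q hp hq => simp [hp, hq, Matrix.mul_add, Matrix.add_mul]
  | monomial m c =>
      simp only [Polynomial.aeval_monomial, conj_pow hUV hVU, Algebra.algebraMap_eq_smul_one,
        smul_mul_assoc, one_mul, Matrix.mul_smul, Matrix.smul_mul]

private lemma aeval_diagonal (v : Fin d → ℝ) (p : Polynomial ℝ) :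
    Polynomial.aeval (diagonal v) p = diagonal (fun i => p.eval (v i)) := by
  induction p using Polynomial.induction_on' with
  | add p q hp hq => simp [hp, hq, diagonal_add]
  | monomial m c =>
      simp only [Polynomial.aeval_monomial, Polynomial.eval_monomial,
        Algebra.algebraMap_eq_smul_one, smul_mul_assoc, one_mul, diagonal_pow]
      rw [← diagonal_smul]
      congr 1

private lemma commute_aeval {X B : Matrix (Fin d) (Fin d) ℝ} (h : Commute B X) (p : Polynomial ℝ) :
    Commute B (Polynomial.aeval X p) := by
  induction p using Polynomial.induction_on' with
  | add p q hp hq => simpa [map_add] using hp.add_right hq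
  | monomial m c =>
      simp only [Polynomial.aeval_monomial, Algebra.algebraMap_eq_smul_one, smul_mul_assoc, one_mul]
      exact (h.pow_right m).smul_right c

private lemma exists_sqrt_commute {X : Matrix (Fin d) (Fin d) ℝ} (hX : X.PosSemidef) :
    ∃ C : Matrix (Fin d) (Fin d) ℝ, C.PosSemidef ∧ C * C = X ∧
      ∀ B, Commute B X → Commute B C := by
  classical
  set U : Matrix (Fin d) (Fin d) ℝ := (hX.1.eigenvectorUnitary : Matrix (Fin d) (Fin d) ℝ) with hU
  have hUV : U * star U = 1 := (Matrix.mem_unitaryGroup_iff).mp hX.1.eigenvectorUnitary.2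
  have hVU : star U * U = 1 := (Matrix.mem_unitaryGroup_iff').mp hX.1.eigenvectorUnitary.2
  set μ : Fin d → ℝ := hX.1.eigenvalues with hμ
  set C : Matrix (Fin d) (Fin d) ℝ := U * diagonal (fun i => Real.sqrt (μ i)) * star U with hC
  have spec : X = U * diagonal μ * star U := by
    have h := hX.1.spectral_theorem
    rw [Unitary.conjStarAlgAut_apply] at h
    exact h
  have hCpsd : C.PosSemidef := by
    have h1 : (diagonal (fun i => Real.sqrt (μ i))).PosSemidef :=
      posSemidef_diagonal_iff.mpr fun i => Real.sqrt_nonneg _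
    have := h1.mul_mul_conjTranspose_same U
    rwa [← Matrix.star_eq_conjTranspose] at this
  refine ⟨C, hCpsd, ?_, ?_⟩
  · calc C * C = U * (diagonal (fun i => Real.sqrt (μ i)) * (star U * U) *
          diagonal (fun i => Real.sqrt (μ i))) * star U := by
          simp only [hC, Matrix.mul_assoc]
    _ = U * diagonal μ * star U := by
          rw [hVU, Matrix.mul_one, diagonal_mul_diagonal]
          have he : (fun i => Real.sqrt (μ i) * Real.sqrt (μ i)) = μ :=
            funext fun i => Real.mul_self_sqrt (hX.eigenvalues_nonneg i)
          rw [he]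
    _ = X := spec.symm
  · intro B hB
    set s : Finset ℝ := Finset.univ.image μ with hs
    set p : Polynomial ℝ := Lagrange.interpolate s id Real.sqrt with hp
    have hCp : C = Polynomial.aeval X p := by
      rw [spec, aeval_conj hUV hVU, aeval_diagonal]
      have he : (fun i => p.eval (μ i)) = fun i => Real.sqrt (μ i) := funext fun i =>
        Lagrange.eval_interpolate_at_node Real.sqrt (Set.injOn_id _)
          (Finset.mem_image_of_mem μ (Finset.mem_univ i))
      rw [he]
    rw [hCp]
    exact commute_aeval hB p

private lemma psd_mul_of_commute {X Y : Matrix (Fin d) (Fin d) ℝ} (hX : X.PosSemidef)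
    (hY : Y.PosSemidef) (h : Commute X Y) : (X * Y).PosSemidef := by
  obtain ⟨C, hC, hCC, hcomm⟩ := exists_sqrt_commute hX
  have h1 : Commute Y C := hcomm Y h.symm
  have hE : X * Y = C * Y * Cᴴ := by
    rw [hC.1.eq]
    calc X * Y = C * (C * Y) := by rw [← hCC, Matrix.mul_assoc]
    _ = C * (Y * C) := by rw [h1.eq]
    _ = C * Y * C := by rw [Matrix.mul_assoc]
  rw [hE]
  exact hY.mul_mul_conjTranspose_same C

private lemma inner_toCLM_nonneg {Z : Matrix (Fin d) (Fin d) ℝ} (hZ : Z.PosSemidef)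
    (x : EuclideanSpace ℝ (Fin d)) :
    0 ≤ inner (𝕜 := ℝ) x (Matrix.toEuclideanCLM (𝕜 := ℝ) Z x) := by
  rw [EuclideanSpace.inner_eq_star_dotProduct]
  have h := hZ.dotProduct_mulVec_nonneg (WithLp.equiv 2 (Fin d → ℝ) x)
  simpa [Matrix.ofLp_toEuclideanCLM, Matrix.toLin'_apply, dotProduct_comm] using h

private lemma opNorm_le_of_psd_le {X Y : Matrix (Fin d) (Fin d) ℝ} (hX : X.PosSemidef)
    (hY : Y.PosSemidef) (hD : (Y - X).PosSemidef) (hc : Commute X Y) :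
    opNorm X ≤ opNorm Y := by
  have hsq : (Y * Y - X * X).PosSemidef := by
    have hcomm2 : Commute (Y - X) (Y + X) := by
      have h := hc.eq
      show (Y - X) * (Y + X) = (Y + X) * (Y - X)
      simp only [sub_mul, mul_add, add_mul, mul_sub, h]
      abel
    have hprod := psd_mul_of_commute hD (hY.add hX) hcomm2
    have he : (Y - X) * (Y + X) = Y * Y - X * X := by
      simp only [sub_mul, mul_add, mul_sub, hc.eq]
      abel
    rwa [he] at hprod
  set T := Matrix.toEuclideanCLM (𝕜 := ℝ) X with hT
  set Sc := Matrix.toEuclideanCLM (𝕜 := ℝ) Y with hS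
  have key : ∀ x : EuclideanSpace ℝ (Fin d), ‖T x‖ ≤ ‖Sc x‖ := by
    intro x
    have hXsq : ‖T x‖ ^ 2 = inner (𝕜 := ℝ) x (Matrix.toEuclideanCLM (𝕜 := ℝ) (X * X) x) := by
      rw [← real_inner_self_eq_norm_sq]
      have : (inner ℝ (T x) (T x) : ℝ) = inner ℝ x (ContinuousLinearMap.adjoint T (T x)) :=
        (ContinuousLinearMap.adjoint_inner_right T x (T x)).symm
      rw [this, ← ContinuousLinearMap.star_eq_adjoint, hT, ← map_star,
        Matrix.star_eq_conjTranspose, hX.1.eq, _root_.map_mul]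
      rfl
    have hYsq : ‖Sc x‖ ^ 2 = inner (𝕜 := ℝ) x (Matrix.toEuclideanCLM (𝕜 := ℝ) (Y * Y) x) := by
      rw [← real_inner_self_eq_norm_sq]
      have : (inner ℝ (Sc x) (Sc x) : ℝ) = inner ℝ x (ContinuousLinearMap.adjoint Sc (Sc x)) :=
        (ContinuousLinearMap.adjoint_inner_right Sc x (Sc x)).symm
      rw [this, ← ContinuousLinearMap.star_eq_adjoint, hS, ← map_star,
        Matrix.star_eq_conjTranspose, hY.1.eq, _root_.map_mul]
      rfl
    have hle : ‖T x‖ ^ 2 ≤ ‖Sc x‖ ^ 2 := by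
      rw [hXsq, hYsq]
      have h0 := inner_toCLM_nonneg hsq x
      rw [map_sub] at h0
      have : inner (𝕜 := ℝ) x ((Matrix.toEuclideanCLM (𝕜 := ℝ) (Y * Y)
          - Matrix.toEuclideanCLM (𝕜 := ℝ) (X * X)) x)
          = inner (𝕜 := ℝ) x (Matrix.toEuclideanCLM (𝕜 := ℝ) (Y * Y) x)
            - inner (𝕜 := ℝ) x (Matrix.toEuclideanCLM (𝕜 := ℝ) (X * X) x) := by
        rw [ContinuousLinearMap.sub_apply, inner_sub_right]
      rw [this] at h0
      linarith
    nlinarith [norm_nonneg (T x), norm_nonneg (Sc x)]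
  unfold opNorm
  exact ContinuousLinearMap.opNorm_le_bound T (norm_nonneg Sc)
    fun x => (key x).trans (Sc.le_opNorm x)


variable {n d : ℕ} (A : Fin n → Matrix (Fin d) (Fin d) ℝ)

def Pc {k : ℕ} (g : Fin k → Fin n) : Matrix (Fin d) (Fin d) ℝ :=
  (List.ofFn fun i => A (g i)).prod

def Inj (n k : ℕ) : Finset (Fin k → Fin n) :=
  Finset.univ.filter (fun j : Fin k → Fin n => Function.Injective j)

def Cmp {k : ℕ} (g : Fin k → Fin n) : Finset (Fin n) :=
  Finset.univ.filter (fun a => ∀ t, g t ≠ a)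

noncomputable def Psum (k : ℕ) : Matrix (Fin d) (Fin d) ℝ := ∑ g ∈ Inj n k, Pc A g

noncomputable def Rsum (k : ℕ) : Matrix (Fin d) (Fin d) ℝ :=
  ∑ g ∈ Inj n (k + 1), A (g 0) * Pc A g

lemma mem_Inj {k : ℕ} {g : Fin k → Fin n} : g ∈ Inj n k ↔ Function.Injective g := by
  simp [Inj]

lemma mem_Cmp {k : ℕ} {g : Fin k → Fin n} {a : Fin n} : a ∈ Cmp g ↔ ∀ t, g t ≠ a := by
  simp [Cmp]

lemma Pc_cons {k : ℕ} (a : Fin n) (g : Fin k → Fin n) :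
    Pc A (Fin.cons a g) = A a * Pc A g := by
  simp [Pc, List.ofFn_succ]

lemma Pc_zero (g : Fin 0 → Fin n) : Pc A g = 1 := by simp [Pc]

lemma Pc_perm (hc : ∀ i j, A i * A j = A j * A i) {k : ℕ} (g : Fin k → Fin n)
    (σ : Equiv.Perm (Fin k)) : Pc A (g ∘ σ) = Pc A g := by
  unfold Pc
  have hperm : (List.ofFn fun i => A (g (σ i))).Perm (List.ofFn fun i => A (g i)) :=
    σ.ofFn_comp_perm (fun i => A (g i))
  apply hperm.prod_eq'
  have : ∀ (l : List (Fin n)), (l.map A).Pairwise Commute := by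
    intro l
    induction l with
    | nil => simp
    | cons a l ih =>
        simp only [List.map_cons, List.pairwise_cons]
        exact ⟨fun b hb => by
          obtain ⟨i, _, rfl⟩ := List.mem_map.mp hb
          exact hc a i, ih⟩
  have he : (List.ofFn fun i => A (g (σ i))) = (List.ofFn fun i => (g (σ i))).map A := by
    rw [List.map_ofFn]; rfl
  rw [he]
  exact this _

lemma sum_inj_succ {β : Type*} [AddCommMonoid β] {k : ℕ}
    (F : (Fin (k + 1) → Fin n) → β) :
    ∑ f ∈ Inj n (k + 1), F f = ∑ g ∈ Inj n k, ∑ a ∈ Cmp g, F (Fin.cons a g) := by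
  rw [← Finset.sum_sigma (Inj n k) (fun g => Cmp g) (fun x => F (Fin.cons x.2 x.1))]
  refine Finset.sum_bij' (fun f _ => (⟨Fin.tail f, f 0⟩ : Σ _g : Fin k → Fin n, Fin n))
    (fun x _ => Fin.cons x.2 x.1) ?_ ?_ ?_ ?_ ?_
  · intro f hf
    rw [mem_Inj] at hf
    rw [Finset.mem_sigma]
    constructor
    · rw [mem_Inj]
      exact hf.comp (Fin.succ_injective _)
    · rw [mem_Cmp]
      intro t h
      exact (Fin.succ_ne_zero t) (hf h)
  · intro x hx
    rw [Finset.mem_sigma] at hx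
    rw [mem_Inj, Fin.cons_injective_iff]
    refine ⟨?_, mem_Inj.mp hx.1⟩
    rintro ⟨t, ht⟩
    exact (mem_Cmp.mp hx.2) t ht
  · intro f _
    exact Fin.cons_self_tail f
  · intro x _
    congr 1
  · intro f _
    rw [Fin.cons_self_tail]

lemma filter_not_Cmp {k : ℕ} {g : Fin k → Fin n} (hg : Function.Injective g) :
    Finset.univ.filter (fun a => ¬ ∀ t, g t ≠ a) = Finset.image g Finset.univ := by
  ext a
  simp only [Finset.mem_filter, Finset.mem_univ, true_and, Finset.mem_image]
  push_neg
  tauto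

lemma card_Cmp {k : ℕ} {g : Fin k → Fin n} (hg : Function.Injective g) :
    (Cmp g).card = n - k := by
  have h1 : Cmp g = Finset.univ \ Finset.image g Finset.univ := by
    ext a
    simp only [Cmp, Finset.mem_filter, Finset.mem_univ, true_and, Finset.mem_sdiff,
      Finset.mem_image]
    push_neg
    tauto
  rw [h1, Finset.card_sdiff_of_subset (Finset.subset_univ _), Finset.card_univ,
    Finset.card_image_of_injective _ hg, Finset.card_univ]
  simp

lemma Cmp_cons {k : ℕ} (b : Fin n) (h : Fin k → Fin n) :
    Cmp (Fin.cons b h) = (Cmp h).erase b := by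
  ext a
  simp only [mem_Cmp, Finset.mem_erase, Fin.forall_fin_succ, Fin.cons_zero, Fin.cons_succ]
  rw [ne_comm]


lemma swap_sum (hc : ∀ i j, A i * A j = A j * A i) {k : ℕ} (t : Fin (k + 1)) :
    ∑ g ∈ Inj n (k + 1), A (g t) * Pc A g = Rsum A k := by
  rw [Rsum]
  set e : (Fin (k + 1) → Fin n) ≃ (Fin (k + 1) → Fin n) :=
    (Equiv.swap 0 t).arrowCongr (Equiv.refl (Fin n)) with he
  have he2 : ∀ g, e g = g ∘ Equiv.swap 0 t := by
    intro g; funext x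
    simp [he, Equiv.arrowCongr, Equiv.symm_swap]
  apply Finset.sum_equiv e
  · intro g
    rw [mem_Inj, mem_Inj, he2]
    exact ((Equiv.swap 0 t).injective_comp g).symm
  · intro g hg
    rw [he2, Pc_perm A hc g (Equiv.swap 0 t)]
    simp [Equiv.swap_apply_left]



section Core

variable {n d : ℕ} (A : Fin n → Matrix (Fin d) (Fin d) ℝ)

lemma psd_smul {X : Matrix (Fin d) (Fin d) ℝ} (hX : X.PosSemidef) {c : ℝ} (hc0 : 0 ≤ c) :
    (c • X).PosSemidef := by
  constructor
  · show (c • X)ᴴ = c • X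
    rw [conjTranspose_smul, hX.1.eq]
    congr
  · intro x
    have h := mul_nonneg hc0 (hX.2 x)
    simpa [Finsupp.mul_sum, smul_eq_mul, mul_assoc, mul_left_comm] using h

lemma psd_sum {ι : Type*} (s : Finset ι) (f : ι → Matrix (Fin d) (Fin d) ℝ)
    (h : ∀ i ∈ s, (f i).PosSemidef) : (∑ i ∈ s, f i).PosSemidef := by
  classical
  induction s using Finset.induction_on with
  | empty => simpa using Matrix.PosSemidef.zero
  | @insert a s' hnot ih =>
      rw [Finset.sum_insert hnot]
      exact (h a (Finset.mem_insert_self a s')).add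
        (ih fun i hi => h i (Finset.mem_insert_of_mem hi))

variable (hA : ∀ i, (A i).PosSemidef) (hc : ∀ i j, A i * A j = A j * A i)

include hc in
lemma commute_A_Pc (i : Fin n) {k : ℕ} (g : Fin k → Fin n) :
    Commute (A i) (Pc A g) := by
  apply Commute.list_prod_right
  intro y hy
  obtain ⟨j, rfl⟩ := List.mem_ofFn.mp hy
  exact hc i (g j)

include hc in
lemma commute_A_Psum (i : Fin n) (k : ℕ) : Commute (A i) (Psum A k) :=
  Commute.sum_right _ _ _ fun g _ => commute_A_Pc A hc i g

include hc in
lemma commute_A_S (i : Fin n) : Commute (A i) (∑ j, A j) :=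
  Commute.sum_right _ _ _ fun j _ => hc i j

include hA hc in
lemma psd_Pc {k : ℕ} (g : Fin k → Fin n) : (Pc A g).PosSemidef := by
  induction k with
  | zero => rw [Pc_zero]; exact Matrix.PosSemidef.one
  | succ k ih =>
      rw [← Fin.cons_self_tail g, Pc_cons]
      exact psd_mul_of_commute (hA _) (ih _) (commute_A_Pc A hc _ _)

include hA hc in
lemma psd_Psum (k : ℕ) : (Psum A k).PosSemidef :=
  psd_sum _ _ fun g _ => psd_Pc A hA hc g

include hA in
lemma psd_S : (∑ i, A i).PosSemidef := psd_sum _ _ fun i _ => hA i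

include hc in
lemma identity (k : ℕ) :
    (∑ i, A i) * Psum A (k + 1) = Psum A (k + 2) + (k + 1) • Rsum A k := by
  have expand : ∀ g ∈ Inj n (k + 1),
      (∑ i, A i) * Pc A g
        = (∑ a ∈ Cmp g, Pc A (Fin.cons a g)) + ∑ t, A (g t) * Pc A g := by
    intro g hg
    rw [Finset.sum_mul]
    rw [← Finset.sum_filter_add_sum_filter_not Finset.univ (fun a => ∀ t, g t ≠ a)
      (fun a => A a * Pc A g)]
    congr 1
    · exact Finset.sum_congr rfl fun a _ => (Pc_cons A a g).symm
    · rw [filter_not_Cmp (mem_Inj.mp hg)]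
      rw [Finset.sum_image (fun x _ y _ hxy => (mem_Inj.mp hg) hxy)]
  calc (∑ i, A i) * Psum A (k + 1)
      = ∑ g ∈ Inj n (k + 1),
          ((∑ a ∈ Cmp g, Pc A (Fin.cons a g)) + ∑ t, A (g t) * Pc A g) := by
        rw [Psum, Finset.mul_sum]
        exact Finset.sum_congr rfl expand
    _ = (∑ g ∈ Inj n (k + 1), ∑ a ∈ Cmp g, Pc A (Fin.cons a g))
        + ∑ g ∈ Inj n (k + 1), ∑ t, A (g t) * Pc A g := Finset.sum_add_distrib
    _ = Psum A (k + 2) + (k + 1) • Rsum A k := by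
        congr 1
        · rw [Psum, sum_inj_succ (Pc A)]
        · rw [Finset.sum_comm]
          calc ∑ t : Fin (k + 1), ∑ g ∈ Inj n (k + 1), A (g t) * Pc A g
              = ∑ _t : Fin (k + 1), Rsum A k :=
                Finset.sum_congr rfl fun t _ => swap_sum A hc t
            _ = (k + 1) • Rsum A k := by
                rw [Finset.sum_const, Finset.card_univ, Fintype.card_fin]

lemma pair_swap {α β : Type*} [DecidableEq α] [AddCommMonoid β] (C : Finset α)
    (F : α → α → β) :
    ∑ b ∈ C, ∑ a ∈ C.erase b, F b a = ∑ b ∈ C, ∑ a ∈ C.erase b, F a b := by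
  exact Finset.sum_comm' (fun b a => by
    simp only [Finset.mem_erase]
    constructor
    · rintro ⟨hb, ha, haC⟩; exact ⟨⟨(Ne.symm ha), hb⟩, haC⟩
    · rintro ⟨⟨hb, hbC⟩, haC⟩; exact ⟨hbC, Ne.symm hb, haC⟩)

include hA hc in
lemma amgm (k : ℕ) (hkn : k + 1 ≤ n) :
    (((n : ℝ) - (k + 1)) • Rsum A k - Psum A (k + 2)).PosSemidef := by
  have hR : Rsum A k = ∑ h ∈ Inj n k, ∑ b ∈ Cmp h, A b * (A b * Pc A h) := by
    rw [Rsum, sum_inj_succ (fun g => A (g 0) * Pc A g)]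
    exact Finset.sum_congr rfl fun h _ => Finset.sum_congr rfl fun b _ => by
      rw [Fin.cons_zero, Pc_cons]
  have hP : Psum A (k + 2)
      = ∑ h ∈ Inj n k, ∑ b ∈ Cmp h, ∑ a ∈ (Cmp h).erase b, A a * (A b * Pc A h) := by
    rw [Psum, sum_inj_succ (Pc A), sum_inj_succ (fun g => ∑ a ∈ Cmp g, Pc A (Fin.cons a g))]
    refine Finset.sum_congr rfl fun h _ => Finset.sum_congr rfl fun b _ => ?_
    rw [Cmp_cons]
    exact Finset.sum_congr rfl fun a _ => by rw [Pc_cons, Pc_cons]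
  have hcard : ∀ h ∈ Inj n k, ∀ b ∈ Cmp h,
      ((n : ℝ) - (k + 1)) • (A b * (A b * Pc A h))
        = ∑ _a ∈ (Cmp h).erase b, A b * (A b * Pc A h) := by
    intro h hh b hb
    rw [Finset.sum_const, Finset.card_erase_of_mem hb, card_Cmp (mem_Inj.mp hh)]
    rw [← Nat.cast_smul_eq_nsmul ℝ]
    congr 1
    have h1 : n - k - 1 = n - (k + 1) := by omega
    rw [h1, Nat.cast_sub hkn]
    push_cast
    ring
  have key : ((n : ℝ) - (k + 1)) • Rsum A k - Psum A (k + 2)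
      = ∑ h ∈ Inj n k, ∑ b ∈ Cmp h, ∑ a ∈ (Cmp h).erase b,
          (A b * (A b * Pc A h) - A a * (A b * Pc A h)) := by
    rw [hR, hP, Finset.smul_sum, ← Finset.sum_sub_distrib]
    refine Finset.sum_congr rfl fun h hh => ?_
    rw [Finset.smul_sum, ← Finset.sum_sub_distrib]
    refine Finset.sum_congr rfl fun b hb => ?_
    rw [hcard h hh b hb, ← Finset.sum_sub_distrib]
  rw [key]
  refine psd_sum _ _ fun h hh => ?_
  set P := Pc A h with hPdef
  set W := ∑ b ∈ Cmp h, ∑ a ∈ (Cmp h).erase b, (A b * (A b * P) - A a * (A b * P)) with hW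
  have hswap : ∑ b ∈ Cmp h, ∑ a ∈ (Cmp h).erase b, A a * (A b * P)
      = ∑ b ∈ Cmp h, ∑ a ∈ (Cmp h).erase b, A b * (A a * P) :=
    pair_swap (Cmp h) (fun b a => A a * (A b * P))
  have hW2 : W = ∑ b ∈ Cmp h, ∑ a ∈ (Cmp h).erase b, (A b * (A b * P) - A b * (A a * P)) := by
    rw [hW]
    simp only [Finset.sum_sub_distrib]
    rw [hswap]
  have hE : (∑ b ∈ Cmp h, ∑ a ∈ (Cmp h).erase b,
        ((A a - A b) * ((A a - A b) * P))) = W + W := by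
    have hterm : ∀ b a : Fin n, (A a - A b) * ((A a - A b) * P)
        = (A a * (A a * P) - A a * (A b * P)) - (A b * (A a * P) - A b * (A b * P)) := by
      intro b a
      simp only [sub_mul, mul_sub]
      abel
    calc (∑ b ∈ Cmp h, ∑ a ∈ (Cmp h).erase b, ((A a - A b) * ((A a - A b) * P)))
        = (∑ b ∈ Cmp h, ∑ a ∈ (Cmp h).erase b, (A a * (A a * P) - A a * (A b * P)))
          - ∑ b ∈ Cmp h, ∑ a ∈ (Cmp h).erase b, (A b * (A a * P) - A b * (A b * P)) := by
          simp only [hterm, Finset.sum_sub_distrib]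
      _ = (∑ b ∈ Cmp h, ∑ a ∈ (Cmp h).erase b, (A b * (A b * P) - A b * (A a * P)))
          - ∑ b ∈ Cmp h, ∑ a ∈ (Cmp h).erase b, (A b * (A a * P) - A b * (A b * P)) := by
          rw [pair_swap (Cmp h) (fun b a => A a * (A a * P) - A a * (A b * P))]
      _ = W + W := by
          rw [hW2]
          simp only [Finset.sum_sub_distrib]
          abel
  have hEpsd : (∑ b ∈ Cmp h, ∑ a ∈ (Cmp h).erase b,
      ((A a - A b) * ((A a - A b) * P))).PosSemidef := by
    refine psd_sum _ _ fun b _ => psd_sum _ _ fun a _ => ?_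
    rw [← mul_assoc]
    have hherm : (A a - A b)ᴴ = A a - A b := by
      rw [conjTranspose_sub, (hA a).1.eq, (hA b).1.eq]
    have hsq : ((A a - A b) * (A a - A b)).PosSemidef := by
      have := Matrix.posSemidef_conjTranspose_mul_self (A a - A b)
      rwa [hherm] at this
    have hcm : Commute ((A a - A b) * (A a - A b)) P :=
      (((commute_A_Pc A hc a h).sub_left (commute_A_Pc A hc b h)).mul_left
        ((commute_A_Pc A hc a h).sub_left (commute_A_Pc A hc b h)))
    exact psd_mul_of_commute hsq (psd_Pc A hA hc h) hcm
  have hWpsd : W.PosSemidef := by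
    have h2 : W = (2⁻¹ : ℝ) • (W + W) := by
      rw [← two_smul ℝ W, smul_smul]
      norm_num
    rw [h2, ← hE]
    exact psd_smul hEpsd (by norm_num)
  exact hWpsd

include hA hc in
lemma main_loewner : ∀ k, k ≤ n →
    ((((n : ℝ))⁻¹ • ∑ i, A i) ^ k
      - (((n - k).factorial : ℝ) / (n.factorial : ℝ)) • Psum A k).PosSemidef := by
  intro k
  induction k with
  | zero =>
      intro _
      have h0 : Inj n 0 = Finset.univ :=
        Finset.filter_true_of_mem fun g _ => Function.injective_of_subsingleton g
      have h1 : Psum A 0 = 1 := by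
        rw [Psum, h0, Finset.univ_unique, Finset.sum_singleton, Pc_zero]
      have h2 : ((n - 0).factorial : ℝ) / (n.factorial : ℝ) = 1 := by
        rw [Nat.sub_zero]
        exact div_self (Nat.cast_ne_zero.mpr n.factorial_ne_zero)
      rw [h1, h2, pow_zero, one_smul, sub_self]
      exact Matrix.PosSemidef.zero
  | succ k ih =>
      cases k with
      | zero =>
          intro h1n
          have hn0 : (n : ℝ) ≠ 0 := Nat.cast_ne_zero.mpr (by omega)
          have h0 : Inj n 1 = Finset.univ :=
            Finset.filter_true_of_mem fun g _ => Function.injective_of_subsingleton g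
          have hP1 : Psum A 1 = ∑ i, A i := by
            rw [Psum, h0]
            exact Fintype.sum_equiv (Equiv.funUnique (Fin 1) (Fin n)) _ _
              fun g => by simp [Pc, List.ofFn_succ]
          have h2 : ((n - 1).factorial : ℝ) / (n.factorial : ℝ) = (n : ℝ)⁻¹ := by
            have hf : (n.factorial : ℝ) = (n : ℝ) * ((n - 1).factorial : ℝ) := by
              rw [← Nat.mul_factorial_pred (by omega : n ≠ 0)]
              push_cast
              ring
            rw [hf]
            have hne : ((n - 1).factorial : ℝ) ≠ 0 :=
              Nat.cast_ne_zero.mpr (Nat.factorial_ne_zero _)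
            field_simp
          rw [hP1, h2, pow_one, sub_self]
          exact Matrix.PosSemidef.zero
      | succ j =>
          intro hjn
          have hD := ih (by omega)
          have hn0 : (n : ℝ) ≠ 0 := Nat.cast_ne_zero.mpr (by omega)
          have hc12 : ((n - (j + 1)).factorial : ℝ) / (n.factorial : ℝ)
              = ((n : ℝ) - (j + 1)) * (((n - (j + 2)).factorial : ℝ) / (n.factorial : ℝ)) := by
            have he : n - (j + 1) = (n - (j + 2)) + 1 := by omega
            rw [he, Nat.factorial_succ]
            have he2 : ((n - (j + 2) + 1 : ℕ) : ℝ) = (n : ℝ) - (j + 1) := by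
              push_cast [Nat.cast_sub (by omega : j + 2 ≤ n)]
              ring
            push_cast [he2]
            ring
          have hX6 : (((n : ℝ) - (j + 1)) • ((∑ i, A i) * Psum A (j + 1))
              - (n : ℝ) • Psum A (j + 2)).PosSemidef := by
            have hid := identity A hc j
            have hamgm := amgm A hA hc j (by omega : j + 1 ≤ n)
            have hsm : (((j : ℝ) + 1) • (((n : ℝ) - (j + 1)) • Rsum A j
                - Psum A (j + 2))).PosSemidef := psd_smul hamgm (by positivity)
            have heq : ((j : ℝ) + 1) • (((n : ℝ) - (j + 1)) • Rsum A j - Psum A (j + 2))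
                = ((n : ℝ) - (j + 1)) • ((∑ i, A i) * Psum A (j + 1))
                  - (n : ℝ) • Psum A (j + 2) := by
              rw [hid]
              have hns : ((j + 1) : ℕ) • Rsum A j = ((j : ℝ) + 1) • Rsum A j := by
                rw [← Nat.cast_smul_eq_nsmul ℝ]
                norm_num
              rw [hns]
              module
            rw [← heq]
            exact hsm
          have hcommD : Commute ((n : ℝ)⁻¹ • ∑ i, A i)
              ((((n : ℝ))⁻¹ • ∑ i, A i) ^ (j + 1)
                - (((n - (j + 1)).factorial : ℝ) / (n.factorial : ℝ)) • Psum A (j + 1)) := by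
            have hcomm1 : ∀ i : Fin n, Commute (A i)
                ((((n : ℝ))⁻¹ • ∑ l, A l) ^ (j + 1)
                  - (((n - (j + 1)).factorial : ℝ) / (n.factorial : ℝ)) • Psum A (j + 1)) :=
              fun i =>
                (((commute_A_S A hc i).smul_right _).pow_right _).sub_right
                  ((commute_A_Psum A hc i _).smul_right _)
            exact (Commute.sum_left _ _ _ fun i _ => hcomm1 i).smul_left _
          have hWD : (((n : ℝ)⁻¹ • ∑ i, A i) *
              ((((n : ℝ))⁻¹ • ∑ i, A i) ^ (j + 1)
                - (((n - (j + 1)).factorial : ℝ) / (n.factorial : ℝ)) • Psum A (j + 1))).PosSemidef :=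
            psd_mul_of_commute (psd_smul (psd_S A hA) (by positivity)) hD hcommD
          have hbr : (((((n - (j + 2)).factorial : ℝ) / (n.factorial : ℝ)) * (n : ℝ)⁻¹) •
              (((n : ℝ) - (j + 1)) • ((∑ i, A i) * Psum A (j + 1))
                - (n : ℝ) • Psum A (j + 2))).PosSemidef :=
            psd_smul hX6 (by positivity)
          have hfinal : (((n : ℝ)⁻¹ • ∑ i, A i) ^ (j + 2)
              - (((n - (j + 2)).factorial : ℝ) / (n.factorial : ℝ)) • Psum A (j + 2))
              = ((n : ℝ)⁻¹ • ∑ i, A i) *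
                  ((((n : ℝ))⁻¹ • ∑ i, A i) ^ (j + 1)
                    - (((n - (j + 1)).factorial : ℝ) / (n.factorial : ℝ)) • Psum A (j + 1))
                + ((((n - (j + 2)).factorial : ℝ) / (n.factorial : ℝ)) * (n : ℝ)⁻¹) •
                  (((n : ℝ) - (j + 1)) • ((∑ i, A i) * Psum A (j + 1))
                    - (n : ℝ) • Psum A (j + 2)) := by
            have e2 : ((n : ℝ)⁻¹ • ∑ i, A i) *
                ((((n - (j + 1)).factorial : ℝ) / (n.factorial : ℝ)) • Psum A (j + 1))
                = ((((n - (j + 1)).factorial : ℝ) / (n.factorial : ℝ)) * (n : ℝ)⁻¹) •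
                  ((∑ i, A i) * Psum A (j + 1)) := by
              rw [mul_smul_comm, smul_mul_assoc, smul_smul, mul_comm]
            rw [mul_sub, e2, ← pow_succ']
            rw [smul_sub, smul_smul, smul_smul, hc12]
            match_scalars <;> field_simp <;> ring
          have : ((((n : ℝ))⁻¹ • ∑ i, A i) ^ (j + 1 + 1)
              - (((n - (j + 1 + 1)).factorial : ℝ) / (n.factorial : ℝ)) • Psum A (j + 1 + 1)).PosSemidef := by
            rw [show j + 1 + 1 = j + 2 from rfl, hfinal]
            exact hWD.add hbr
          exact this

end Core

end CommAMGM

/-- If `A₁, …, Aₙ` are pairwise commuting positive semidefinite matrices, then the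
operator norm of the without-replacement average of ordered products of `k` distinct
matrices is at most the operator norm of `((1/n) Σᵢ Aᵢ) ^ k`. -/
theorem commuting_amgm (n d k : ℕ) (hk : k ≤ n) (A : Fin n → Matrix (Fin d) (Fin d) ℝ)
    (hA : ∀ i, (A i).PosSemidef) (hcomm : ∀ i j, A i * A j = A j * A i) :
    opNorm ((((n - k).factorial : ℝ) / (n.factorial : ℝ)) •
        ∑ j ∈ Finset.univ.filter (fun j : Fin k → Fin n => Function.Injective j),
          (List.ofFn fun i => A (j i)).prod) ≤
      opNorm (((n : ℝ)⁻¹ • ∑ i, A i) ^ k) := by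
  have hmain := CommAMGM.main_loewner A hA hcomm k hk
  have hX : ((((n - k).factorial : ℝ) / (n.factorial : ℝ)) • CommAMGM.Psum A k).PosSemidef :=
    CommAMGM.psd_smul (CommAMGM.psd_Psum A hA hcomm k) (by positivity)
  have hY : ((((n : ℝ))⁻¹ • ∑ i, A i) ^ k).PosSemidef :=
    (CommAMGM.psd_smul (CommAMGM.psd_S A hA) (by positivity)).pow k
  have hPS : Commute (∑ i, A i) (CommAMGM.Psum A k) :=
    Commute.sum_left _ _ _ fun i _ => CommAMGM.commute_A_Psum A hcomm i k
  have hcXY : Commute ((((n - k).factorial : ℝ) / (n.factorial : ℝ)) • CommAMGM.Psum A k)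
      ((((n : ℝ))⁻¹ • ∑ i, A i) ^ k) :=
    ((hPS.symm.smul_right _).pow_right _).smul_left _
  exact CommAMGM.opNorm_le_of_psd_le hX hY hmain hcXY
end

section
/- Deterministic worst-case bound: for positive semidefinite d×d matrices A₁,…,Aₙ and any k ≤ n, the operator norm of the without-replacement average of ordered products of k distinct matrices is at most d^k times the operator norm of ((1/n)ΣᵢAᵢ)^k. -/
open Matrix Finset

open scoped Matrix.Norms.L2Operator

section ScalarLemmas
variable {n : ℕ}

noncomputable def esym (t : Fin n → ℝ) (s : Finset (Fin n)) (m : ℕ) : ℝ :=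
  ∑ T ∈ s.powersetCard m, ∏ i ∈ T, t i

lemma esym_zero (t : Fin n → ℝ) (s : Finset (Fin n)) : esym t s 0 = 1 := by
  simp [esym]

lemma esym_nonneg {t : Fin n → ℝ} (ht : ∀ i, 0 ≤ t i) (s : Finset (Fin n)) (m : ℕ) :
    0 ≤ esym t s m :=
  Finset.sum_nonneg fun T _ => Finset.prod_nonneg fun i _ => ht i

lemma esym_insert (t : Fin n → ℝ) {a : Fin n} {s : Finset (Fin n)} (ha : a ∉ s) (m : ℕ) :
    esym t (insert a s) (m + 1) = esym t s (m + 1) + t a * esym t s m := by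
  rw [esym, powersetCard_succ_insert ha, sum_union, sum_image]
  · rw [esym, esym, mul_sum]
    congr 1
    refine sum_congr rfl fun T hT => ?_
    rw [mem_powersetCard] at hT
    exact prod_insert (fun haT => ha (hT.1 haT))
  · intro T hT U hU h
    rw [Finset.mem_coe, mem_powersetCard] at hT hU
    have hAT : a ∉ T := fun h' => ha (hT.1 h')
    have hAU : a ∉ U := fun h' => ha (hU.1 h')
    rw [← erase_insert hAT, ← erase_insert hAU, h]
  · rw [disjoint_left]
    intro T hT hT2
    rw [mem_powersetCard] at hT
    obtain ⟨U, hU, rfl⟩ := mem_image.mp hT2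
    exact ha (hT.1 (mem_insert_self a U))



lemma esym_succ_mul (t : Fin n → ℝ) (s : Finset (Fin n)) (m : ℕ) :
    ((m : ℝ) + 1) * esym t s (m + 1) = ∑ i ∈ s, t i * esym t (s.erase i) m := by
  have lhs : ((m : ℝ) + 1) * esym t s (m + 1)
      = ∑ T ∈ s.powersetCard (m + 1), ∑ i ∈ T, ∏ x ∈ T, t x := by
    rw [esym, mul_sum]
    refine sum_congr rfl fun T hT => ?_
    rw [mem_powersetCard] at hT
    rw [sum_const, hT.2, nsmul_eq_mul]
    push_cast
    ring
  have rhs : ∑ i ∈ s, t i * esym t (s.erase i) m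
      = ∑ i ∈ s, ∑ T ∈ (s.erase i).powersetCard m, t i * ∏ x ∈ T, t x := by
    refine sum_congr rfl fun i _ => ?_
    rw [esym, mul_sum]
  rw [lhs, rhs, sum_sigma', sum_sigma']
  refine sum_nbij' (fun p => ⟨p.2, p.1.erase p.2⟩) (fun p => ⟨insert p.1 p.2, p.1⟩) ?_ ?_ ?_ ?_ ?_
  · rintro ⟨T, i⟩ hp
    simp only [mem_sigma, mem_powersetCard] at hp ⊢
    obtain ⟨⟨hTs, hTc⟩, hiT⟩ := hp
    refine ⟨hTs hiT, ?_, ?_⟩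
    · intro x hx
      rw [mem_erase] at hx
      exact mem_erase.mpr ⟨hx.1, hTs hx.2⟩
    · rw [card_erase_of_mem hiT, hTc]; rfl
  · rintro ⟨i, T⟩ hp
    simp only [mem_sigma, mem_powersetCard] at hp ⊢
    obtain ⟨his, hTs, hTc⟩ := hp
    have hiT : i ∉ T := fun h => (mem_erase.mp (hTs h)).1 rfl
    refine ⟨⟨?_, ?_⟩, mem_insert_self i T⟩
    · intro x hx
      rcases mem_insert.mp hx with rfl | hx
      · exact his
      · exact (mem_erase.mp (hTs hx)).2
    · rw [card_insert_of_notMem hiT, hTc]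
  · rintro ⟨T, i⟩ hp
    simp only [mem_sigma, mem_powersetCard] at hp
    exact Sigma.ext (insert_erase hp.2) HEq.rfl
  · rintro ⟨i, T⟩ hp
    simp only [mem_sigma, mem_powersetCard] at hp
    have hiT : i ∉ T := fun h => (mem_erase.mp (hp.2.1 h)).1 rfl
    exact Sigma.ext rfl (heq_of_eq (erase_insert hiT))
  · rintro ⟨T, i⟩ hp
    simp only [mem_sigma, mem_powersetCard] at hp
    exact (mul_prod_erase T t hp.2).symm




lemma esym_erase_eq (t : Fin n → ℝ) {i : Fin n} {s : Finset (Fin n)} (hi : i ∈ s) (m : ℕ) :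
    esym t s (m + 1) = esym t (s.erase i) (m + 1) + t i * esym t (s.erase i) m := by
  conv_lhs => rw [← insert_erase hi]
  exact esym_insert t (notMem_erase i s) m

lemma monovary_aux {t : Fin n → ℝ} (ht : ∀ i, 0 ≤ t i) (m : ℕ) :
    MonovaryOn t (fun i => t i * esym t (Finset.univ.erase i) m) (Finset.univ : Finset (Fin n)) := by
  have key : ∀ i j : Fin n, i ≠ j → t j ≤ t i →
      t j * esym t (Finset.univ.erase j) m ≤ t i * esym t (Finset.univ.erase i) m := by
    intro i j hij htji
    cases m with
    | zero => simp only [esym_zero]; linarith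
    | succ p =>
      have hji : j ∈ (Finset.univ : Finset (Fin n)).erase i := mem_erase.mpr ⟨(Ne.symm hij), mem_univ j⟩
      have hij' : i ∈ (Finset.univ : Finset (Fin n)).erase j := mem_erase.mpr ⟨hij, mem_univ i⟩
      have e1 : esym t (Finset.univ.erase i) (p + 1)
          = esym t ((Finset.univ.erase i).erase j) (p + 1)
            + t j * esym t ((Finset.univ.erase i).erase j) p := esym_erase_eq t hji p
      have e2 : esym t (Finset.univ.erase j) (p + 1)
          = esym t ((Finset.univ.erase i).erase j) (p + 1)
            + t i * esym t ((Finset.univ.erase i).erase j) p := by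
        rw [erase_right_comm]
        exact esym_erase_eq t hij' p
      have hP := esym_nonneg ht ((Finset.univ.erase i).erase j) (p + 1)
      have hR := esym_nonneg ht ((Finset.univ.erase i).erase j) p
      have h0i := ht i
      have h0j := ht j
      rw [e1, e2]
      nlinarith
  intro i _ j _ hlt
  by_contra hc
  push_neg at hc
  rcases eq_or_ne i j with rfl | hij
  · exact lt_irrefl _ hlt
  · exact absurd hlt (not_lt.mpr (key i j hij hc.le))

lemma step_ineq {t : Fin n → ℝ} (ht : ∀ i, 0 ≤ t i) (m : ℕ) :
    ((m : ℝ) + 1) * n * esym t Finset.univ (m + 1)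
      ≤ ((n : ℝ) - m) * (∑ i, t i) * esym t Finset.univ m := by
  have hcard : (Finset.univ : Finset (Fin n)).card = n := card_univ.trans (Fintype.card_fin n)
  cases m with
  | zero =>
    have h1 := esym_succ_mul t (Finset.univ : Finset (Fin n)) 0
    simp only [esym_zero, mul_one, Nat.cast_zero, zero_add, one_mul] at h1 ⊢
    rw [h1]
    exact le_of_eq (by ring)
  | succ p =>
    have h1 := esym_succ_mul t (Finset.univ : Finset (Fin n)) (p + 1)
    have h2 : ∀ i : Fin n, t i * esym t (Finset.univ.erase i) (p + 1)
        = t i * esym t Finset.univ (p + 1) - t i * (t i * esym t (Finset.univ.erase i) p) := by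
      intro i
      rw [esym_erase_eq t (mem_univ i) p]
      ring
    push_cast at h1
    have expand : ((p : ℝ) + 1 + 1) * esym t Finset.univ (p + 1 + 1)
        = (∑ i, t i) * esym t Finset.univ (p + 1)
          - ∑ i, t i * (t i * esym t (Finset.univ.erase i) p) := by
      rw [h1]
      rw [sum_congr rfl (fun i _ => h2 i), sum_sub_distrib, ← sum_mul]
    have cheb := (monovary_aux ht p).sum_mul_sum_le_card_mul_sum
    rw [hcard] at cheb
    have h4 := esym_succ_mul t (Finset.univ : Finset (Fin n)) p
    -- cheb : (∑ t) * (∑ i, t i * esym (erase i) p) ≤ n * ∑ i, t i * (t i * esym (erase i) p)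
    have key : (∑ i, t i) * (((p : ℝ) + 1) * esym t Finset.univ (p + 1))
        ≤ (n : ℝ) * ∑ i, t i * (t i * esym t (Finset.univ.erase i) p) := by
      rw [h4]; exact cheb
    have e2 : ((p : ℝ) + 1 + 1) * (n : ℝ) * esym t Finset.univ (p + 1 + 1)
        = (n : ℝ) * ((∑ i, t i) * esym t Finset.univ (p + 1)
          - ∑ i, t i * (t i * esym t (Finset.univ.erase i) p)) := by
      linear_combination (n : ℝ) * expand
    push_cast at e2 key ⊢
    nlinarith [key, e2]


lemma maclaurin {t : Fin n → ℝ} (ht : ∀ i, 0 ≤ t i) :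
    ∀ k, k ≤ n → ((n - k).factorial : ℝ) * k.factorial * (n : ℝ) ^ k * esym t Finset.univ k
      ≤ (n.factorial : ℝ) * (∑ i, t i) ^ k := by
  intro k
  induction k with
  | zero => intro _; simp [esym_zero]
  | succ k ih =>
    intro hk1
    have hk : k ≤ n := Nat.le_of_succ_le hk1
    have hsum : (0 : ℝ) ≤ ∑ i, t i := Finset.sum_nonneg fun i _ => ht i
    have hC : (0 : ℝ) ≤ ((n - (k+1)).factorial : ℝ) * k.factorial * (n : ℝ) ^ k := by positivity
    have hstep := step_ineq ht k
    have hfac : ((n - k).factorial : ℝ) = ((n : ℝ) - k) * ((n - (k+1)).factorial : ℝ) := by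
      have h1 : n - k = (n - (k+1)) + 1 := by omega
      rw [h1, Nat.factorial_succ]
      push_cast [Nat.cast_sub hk1]
      ring
    calc ((n - (k+1)).factorial : ℝ) * ((k+1).factorial : ℝ) * (n : ℝ) ^ (k+1) * esym t Finset.univ (k+1)
        = (((n - (k+1)).factorial : ℝ) * k.factorial * (n : ℝ) ^ k)
            * (((k : ℝ) + 1) * n * esym t Finset.univ (k+1)) := by
          push_cast [Nat.factorial_succ]; ring
      _ ≤ (((n - (k+1)).factorial : ℝ) * k.factorial * (n : ℝ) ^ k)
            * (((n : ℝ) - k) * (∑ i, t i) * esym t Finset.univ k) :=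
          mul_le_mul_of_nonneg_left hstep hC
      _ = (∑ i, t i) * (((n - k).factorial : ℝ) * k.factorial * (n : ℝ) ^ k * esym t Finset.univ k) := by
          rw [hfac]; ring
      _ ≤ (∑ i, t i) * ((n.factorial : ℝ) * (∑ i, t i) ^ k) :=
          mul_le_mul_of_nonneg_left (ih hk) hsum
      _ = (n.factorial : ℝ) * (∑ i, t i) ^ (k+1) := by ring


lemma card_fiber {k : ℕ} (T : Finset (Fin n)) (hT : T.card = k) :
    (Finset.univ.filter (fun j : Fin k → Fin n =>
        Function.Injective j ∧ Finset.univ.image j = T)).card = k.factorial := by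
  classical
  rw [← Fintype.card_subtype]
  have hcardT : Fintype.card {x // x ∈ T} = k := by rw [Fintype.card_coe, hT]
  let Φ : (Fin k ≃ {x // x ∈ T}) →
      {j : Fin k → Fin n // Function.Injective j ∧ Finset.univ.image j = T} := fun e =>
    ⟨fun i => (e i : Fin n), by
      constructor
      · intro a b hab
        exact e.injective (Subtype.ext hab)
      · apply Finset.Subset.antisymm
        · intro x hx
          obtain ⟨i, _, rfl⟩ := Finset.mem_image.mp hx
          exact (e i).2
        · intro x hx
          exact Finset.mem_image.mpr ⟨e.symm ⟨x, hx⟩, Finset.mem_univ _, by simp⟩⟩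
  have hbij : Function.Bijective Φ := by
    constructor
    · intro e₁ e₂ h
      have := congrArg Subtype.val h
      exact Equiv.ext fun i => Subtype.ext (congrFun this i)
    · rintro ⟨j, hjinj, hjim⟩
      have hmem : ∀ i, j i ∈ T := fun i => by
        rw [← hjim]; exact Finset.mem_image_of_mem j (Finset.mem_univ i)
      have hf : Function.Bijective (fun i => (⟨j i, hmem i⟩ : {x // x ∈ T})) := by
        refine (Fintype.bijective_iff_injective_and_card _).mpr ⟨?_, ?_⟩
        · intro a b hab
          exact hjinj (congrArg Subtype.val hab)
        · rw [hcardT, Fintype.card_fin]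
      exact ⟨Equiv.ofBijective _ hf, Subtype.ext rfl⟩
  rw [← Fintype.card_of_bijective hbij,
    Fintype.card_equiv (Fintype.equivOfCardEq (by rw [hcardT, Fintype.card_fin])),
    Fintype.card_fin]

lemma sum_inj (t : Fin n → ℝ) (k : ℕ) :
    ∑ j ∈ Finset.univ.filter (fun j : Fin k → Fin n => Function.Injective j), ∏ i, t (j i)
      = (k.factorial : ℝ) * esym t Finset.univ k := by
  classical
  rw [← Finset.sum_fiberwise_of_maps_to (g := fun j : Fin k → Fin n => Finset.univ.image j)
    (t := (Finset.univ : Finset (Fin n)).powersetCard k) ?_]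
  · rw [esym, mul_sum]
    refine sum_congr rfl fun T hT => ?_
    rw [mem_powersetCard] at hT
    have : ∀ j ∈ (Finset.univ.filter (fun j : Fin k → Fin n => Function.Injective j)).filter
        (fun j => Finset.univ.image j = T), (∏ i, t (j i)) = ∏ m ∈ T, t m := by
      intro j hj
      simp only [mem_filter, mem_univ, true_and] at hj
      rw [← hj.2]
      exact (Finset.prod_image fun x _ y _ h => hj.1 h).symm
    rw [sum_congr rfl this, sum_const, nsmul_eq_mul]
    congr 1
    rw [Finset.filter_filter, card_fiber T hT.2]
  · intro j hj
    simp only [mem_filter, mem_univ, true_and] at hj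
    rw [mem_powersetCard]
    exact ⟨subset_univ _, by rw [Finset.card_image_of_injective _ hj, card_univ, Fintype.card_fin]⟩

end ScalarLemmas

section MatrixLemmas
variable {d : ℕ}

lemma opNorm_eq {d : ℕ} (X : Matrix (Fin d) (Fin d) ℝ) : opNorm X = ‖X‖ := rfl


lemma psd_diag_nonneg {M : Matrix (Fin d) (Fin d) ℝ} (hM : M.PosSemidef) (i : Fin d) :
    0 ≤ M i i := by
  have := hM.dotProduct_mulVec_nonneg (Pi.single i 1)
  simpa [Matrix.mulVec_single, single_dotProduct] using this

lemma psd_entry_sq {M : Matrix (Fin d) (Fin d) ℝ} (hM : M.PosSemidef) (i j : Fin d) :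
    M i j ^ 2 ≤ M i i * M j j := by
  obtain ⟨B, rfl⟩ : ∃ B : Matrix (Fin d) (Fin d) ℝ, M = Bᴴ * B := by
    open scoped MatrixOrder in
    exact CStarAlgebra.nonneg_iff_eq_star_mul_self.mp (Matrix.nonneg_iff_posSemidef.mpr hM)
  have h1 : ∀ a b : Fin d, (Bᴴ * B) a b = ∑ l, B l a * B l b := by
    intro a b
    simp [Matrix.mul_apply, Matrix.conjTranspose_apply]
  rw [h1, h1, h1]
  simp only [← sq]
  exact Finset.sum_mul_sq_le_sq_mul_sq Finset.univ (fun l => B l i) (fun l => B l j)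

lemma psd_trace_nonneg {M : Matrix (Fin d) (Fin d) ℝ} (hM : M.PosSemidef) : 0 ≤ M.trace :=
  Finset.sum_nonneg fun i _ => psd_diag_nonneg hM i

lemma psd_norm_le_trace {M : Matrix (Fin d) (Fin d) ℝ} (hM : M.PosSemidef) :
    ‖M‖ ≤ M.trace := by
  have htr : 0 ≤ M.trace := psd_trace_nonneg hM
  rw [Matrix.l2_opNorm_def]
  refine ContinuousLinearMap.opNorm_le_bound _ htr fun x => ?_
  have happ : ((Matrix.toEuclideanLin.trans LinearMap.toContinuousLinearMap) M) x
      = (WithLp.equiv 2 (Fin d → ℝ)).symm (M *ᵥ (WithLp.equiv 2 (Fin d → ℝ)) x) := rfl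
  rw [happ]
  have hxnorm : ‖x‖ ^ 2 = ∑ j, x j ^ 2 := by
    rw [EuclideanSpace.norm_eq, Real.sq_sqrt (Finset.sum_nonneg fun j _ => sq_nonneg _)]
    · congr 1; ext j; rw [Real.norm_eq_abs, sq_abs]
  rw [EuclideanSpace.norm_eq]
  have key : ∑ i, ‖((WithLp.equiv 2 (Fin d → ℝ)).symm (M *ᵥ (WithLp.equiv 2 (Fin d → ℝ)) x)) i‖ ^ 2
      ≤ (M.trace * ‖x‖) ^ 2 := by
    have hentry : ∀ i j : Fin d, |M i j| ≤ Real.sqrt (M i i) * Real.sqrt (M j j) := by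
      intro i j
      rw [← Real.sqrt_sq_eq_abs, ← Real.sqrt_mul (psd_diag_nonneg hM i)]
      exact Real.sqrt_le_sqrt (psd_entry_sq hM i j)
    set c : ℝ := ∑ j, Real.sqrt (M j j) * |x j| with hc
    have hc0 : 0 ≤ c := Finset.sum_nonneg fun j _ =>
      mul_nonneg (Real.sqrt_nonneg _) (abs_nonneg _)
    have hA : ∀ i : Fin d, (M *ᵥ (fun j => x j)) i ^ 2 ≤ M i i * c ^ 2 := by
      intro i
      have h1 : |(M *ᵥ (fun j => x j)) i| ≤ Real.sqrt (M i i) * c := by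
        calc |(M *ᵥ (fun j => x j)) i| = |∑ j, M i j * x j| := rfl
          _ ≤ ∑ j, |M i j * x j| := Finset.abs_sum_le_sum_abs _ _
          _ ≤ ∑ j, Real.sqrt (M i i) * (Real.sqrt (M j j) * |x j|) := by
              refine Finset.sum_le_sum fun j _ => ?_
              rw [abs_mul]
              calc |M i j| * |x j| ≤ Real.sqrt (M i i) * Real.sqrt (M j j) * |x j| :=
                    mul_le_mul_of_nonneg_right (hentry i j) (abs_nonneg _)
                _ = Real.sqrt (M i i) * (Real.sqrt (M j j) * |x j|) := by ring
          _ = Real.sqrt (M i i) * c := by rw [hc, ← Finset.mul_sum]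
      calc (M *ᵥ (fun j => x j)) i ^ 2 = |(M *ᵥ (fun j => x j)) i| ^ 2 := (sq_abs _).symm
        _ ≤ (Real.sqrt (M i i) * c) ^ 2 := by
            exact pow_le_pow_left₀ (abs_nonneg _) h1 2
        _ = M i i * c ^ 2 := by
            rw [mul_pow, Real.sq_sqrt (psd_diag_nonneg hM i)]
    have hCS : c ^ 2 ≤ M.trace * ‖x‖ ^ 2 := by
      rw [hc, hxnorm]
      have := Finset.sum_mul_sq_le_sq_mul_sq Finset.univ
        (fun j => Real.sqrt (M j j)) (fun j => |x j|)
      calc (∑ j, Real.sqrt (M j j) * |x j|) ^ 2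
          ≤ (∑ j, Real.sqrt (M j j) ^ 2) * ∑ j, |x j| ^ 2 := this
        _ = M.trace * ∑ j, x j ^ 2 := by
            congr 1
            · rw [Matrix.trace]
              refine Finset.sum_congr rfl fun j _ => Real.sq_sqrt (psd_diag_nonneg hM j)
            · refine Finset.sum_congr rfl fun j _ => sq_abs _
    calc ∑ i, ‖((WithLp.equiv 2 (Fin d → ℝ)).symm (M *ᵥ (WithLp.equiv 2 (Fin d → ℝ)) x)) i‖ ^ 2
        = ∑ i, (M *ᵥ (fun j => x j)) i ^ 2 := by
          refine Finset.sum_congr rfl fun i _ => ?_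
          rw [Real.norm_eq_abs, sq_abs]; rfl
      _ ≤ ∑ i : Fin d, M i i * c ^ 2 := Finset.sum_le_sum fun i _ => hA i
      _ = M.trace * c ^ 2 := by rw [Matrix.trace, Finset.sum_mul]; rfl
      _ ≤ M.trace * (M.trace * ‖x‖ ^ 2) := mul_le_mul_of_nonneg_left hCS htr
      _ = (M.trace * ‖x‖) ^ 2 := by ring
  calc Real.sqrt (∑ i, ‖((WithLp.equiv 2 (Fin d → ℝ)).symm (M *ᵥ (WithLp.equiv 2 (Fin d → ℝ)) x)) i‖ ^ 2)
      ≤ Real.sqrt ((M.trace * ‖x‖) ^ 2) := Real.sqrt_le_sqrt key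
    _ = M.trace * ‖x‖ := Real.sqrt_sq (mul_nonneg htr (norm_nonneg _))



lemma diag_le_norm {M : Matrix (Fin d) (Fin d) ℝ} (i : Fin d) : M i i ≤ ‖M‖ := by
  set y : EuclideanSpace ℝ (Fin d) :=
    Matrix.toEuclideanCLM (𝕜 := ℝ) M ((WithLp.equiv 2 (Fin d → ℝ)).symm (Pi.single i 1)) with hy
  have hyi : y i = M i i := by
    rw [hy, Matrix.toEuclideanCLM_toLp]
    show (M *ᵥ Pi.single i 1) i = M i i
    rw [Matrix.mulVec_single]
    exact mul_one _
  have h1 : M i i ≤ |y i| := by rw [hyi]; exact le_abs_self _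
  have h2 : |y i| ≤ ‖y‖ := by
    rw [EuclideanSpace.norm_eq]
    have : |y i| = Real.sqrt (‖y i‖ ^ 2) := by
      rw [Real.norm_eq_abs, sq_abs, Real.sqrt_sq_eq_abs]
    rw [this]
    exact Real.sqrt_le_sqrt (Finset.single_le_sum (f := fun j => ‖y j‖ ^ 2)
      (fun j _ => sq_nonneg _) (Finset.mem_univ i))
  have h3 : ‖y‖ ≤ ‖M‖ := by
    rw [hy]
    calc ‖Matrix.toEuclideanCLM (𝕜 := ℝ) M ((WithLp.equiv 2 (Fin d → ℝ)).symm (Pi.single i 1))‖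
        ≤ ‖Matrix.toEuclideanCLM (𝕜 := ℝ) M‖ * ‖(WithLp.equiv 2 (Fin d → ℝ)).symm (Pi.single i 1)‖ :=
          ContinuousLinearMap.le_opNorm _ _
      _ = ‖M‖ * ‖EuclideanSpace.single i (1:ℝ)‖ := rfl
      _ = ‖M‖ := by rw [EuclideanSpace.norm_single]; simp
  linarith

lemma trace_le_dim_mul_norm (M : Matrix (Fin d) (Fin d) ℝ) : M.trace ≤ d * ‖M‖ := by
  rw [Matrix.trace]
  calc ∑ i, M.diag i ≤ ∑ _i : Fin d, ‖M‖ := Finset.sum_le_sum fun i _ => diag_le_norm i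
    _ = d * ‖M‖ := by rw [Finset.sum_const, card_univ, Fintype.card_fin, nsmul_eq_mul]

lemma norm_pow_le_norm_pow {M : Matrix (Fin d) (Fin d) ℝ} (hM : M.PosSemidef) {k : ℕ}
    (hk : 1 ≤ k) : ‖M‖ ^ k ≤ ‖M ^ k‖ := by
  have hsa : IsSelfAdjoint M := hM.isHermitian
  rcases eq_or_lt_of_le (norm_nonneg M) with h0 | h0
  · rw [← h0, zero_pow (by omega)]
    exact norm_nonneg _
  · obtain ⟨N, hN⟩ : ∃ N, k < 2 ^ N := ⟨k, k.lt_two_pow_self⟩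
    have key : ‖M ^ 2 ^ N‖ = ‖M‖ ^ 2 ^ N := by
      have h := hsa.nnnorm_pow_two_pow N
      rw [← coe_nnnorm, h, NNReal.coe_pow, coe_nnnorm]
    have hsplit : ‖M‖ ^ k * ‖M‖ ^ (2 ^ N - k) ≤ ‖M ^ k‖ * ‖M‖ ^ (2 ^ N - k) := by
      calc ‖M‖ ^ k * ‖M‖ ^ (2 ^ N - k) = ‖M‖ ^ 2 ^ N := by
            rw [← pow_add]; congr 1; omega
        _ = ‖M ^ 2 ^ N‖ := key.symm
        _ = ‖M ^ k * M ^ (2 ^ N - k)‖ := by rw [← pow_add]; congr 2; omega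
        _ ≤ ‖M ^ k‖ * ‖M ^ (2 ^ N - k)‖ := norm_mul_le _ _
        _ ≤ ‖M ^ k‖ * ‖M‖ ^ (2 ^ N - k) :=
            mul_le_mul_of_nonneg_left (norm_pow_le' M (by omega)) (norm_nonneg _)
    exact le_of_mul_le_mul_right hsplit (pow_pos h0 _)

lemma psd_sum {n : ℕ} (A : Fin n → Matrix (Fin d) (Fin d) ℝ) (hA : ∀ i, (A i).PosSemidef) :
    (∑ i, A i).PosSemidef :=
  Finset.sum_induction A Matrix.PosSemidef (fun a b ha hb => ha.add hb)
    Matrix.PosSemidef.zero (fun i _ => hA i)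

lemma psd_smul {M : Matrix (Fin d) (Fin d) ℝ} (hM : M.PosSemidef) {c : ℝ} (hc : 0 ≤ c) :
    (c • M).PosSemidef := by
  refine .of_dotProduct_mulVec_nonneg ?_ fun x => ?_
  · rw [Matrix.IsHermitian, Matrix.conjTranspose_smul]
    rw [hM.isHermitian]
    congr 1
  · rw [Matrix.smul_mulVec, dotProduct_smul]
    exact mul_nonneg hc (hM.dotProduct_mulVec_nonneg x)

end MatrixLemmas

/-- Deterministic worst-case bound: for positive semidefinite `d × d` matrices
`A₁, …, Aₙ` and `k ≤ n`, the operator norm of the without-replacement average of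
ordered products of `k` distinct matrices is at most `d ^ k` times the operator norm
of `((1/n) Σᵢ Aᵢ) ^ k`. -/
theorem worst_case_amgm (n d k : ℕ) (hk : k ≤ n) (A : Fin n → Matrix (Fin d) (Fin d) ℝ)
    (hA : ∀ i, (A i).PosSemidef) :
    opNorm ((((n - k).factorial : ℝ) / (n.factorial : ℝ)) •
        ∑ j ∈ Finset.univ.filter (fun j : Fin k → Fin n => Function.Injective j),
          (List.ofFn fun i => A (j i)).prod) ≤
      (d : ℝ) ^ k * opNorm (((n : ℝ)⁻¹ • ∑ i, A i) ^ k) := by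
  classical
  simp only [opNorm_eq]
  rcases Nat.eq_zero_or_pos k with rfl | hkpos
  · -- k = 0 : both sides are ‖1‖
    have h1 : (Finset.univ.filter (fun j : Fin 0 → Fin n => Function.Injective j))
        = Finset.univ := filter_true_of_mem (fun j _ a b _ => Subsingleton.elim a b)
    have h2 : ∑ j ∈ (Finset.univ : Finset (Fin 0 → Fin n)),
        (List.ofFn fun i => A (j i)).prod = (1 : Matrix (Fin d) (Fin d) ℝ) := by
      have he : ∀ j : Fin 0 → Fin n, (List.ofFn fun i : Fin 0 => A (j i)).prod = 1 :=
        fun j => by simp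
      rw [Finset.sum_congr rfl (fun j _ => he j), Finset.sum_const]
      have : (Finset.univ : Finset (Fin 0 → Fin n)).card = 1 := by
        rw [Finset.card_univ, Fintype.card_fun]
        simp
      rw [this, one_nsmul]
    rw [h1, h2, Nat.sub_zero, div_self (by exact_mod_cast n.factorial_ne_zero), one_smul,
      pow_zero, pow_zero, one_mul]
  · -- k ≥ 1
    have hn : 1 ≤ n := le_trans hkpos hk
    set t : Fin n → ℝ := fun i => (A i).trace with htdef
    have ht : ∀ i, 0 ≤ t i := fun i => psd_trace_nonneg (hA i)
    have hsumt : (0 : ℝ) ≤ ∑ i, t i := Finset.sum_nonneg fun i _ => ht i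
    have hSpsd : (((n : ℝ)⁻¹ • ∑ i, A i)).PosSemidef :=
      psd_smul (psd_sum A hA) (by positivity)
    have htrS : ((n : ℝ)⁻¹ • ∑ i, A i).trace = (n : ℝ)⁻¹ * ∑ i, t i := by
      rw [Matrix.trace_smul, Matrix.trace_sum, smul_eq_mul]
    have hc : (0 : ℝ) ≤ ((n - k).factorial : ℝ) / (n.factorial : ℝ) := by positivity
    have hnf : (0 : ℝ) < (n.factorial : ℝ) := by exact_mod_cast n.factorial_pos
    have hnk : (0 : ℝ) < (n : ℝ) ^ k := by positivity
    calc ‖(((n - k).factorial : ℝ) / (n.factorial : ℝ)) •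
          ∑ j ∈ Finset.univ.filter (fun j : Fin k → Fin n => Function.Injective j),
            (List.ofFn fun i => A (j i)).prod‖
        = (((n - k).factorial : ℝ) / (n.factorial : ℝ)) *
            ‖∑ j ∈ Finset.univ.filter (fun j : Fin k → Fin n => Function.Injective j),
              (List.ofFn fun i => A (j i)).prod‖ := by
          rw [norm_smul, Real.norm_eq_abs, abs_of_nonneg hc]
      _ ≤ (((n - k).factorial : ℝ) / (n.factorial : ℝ)) *
            ∑ j ∈ Finset.univ.filter (fun j : Fin k → Fin n => Function.Injective j),
              ∏ i, t (j i) := by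
          refine mul_le_mul_of_nonneg_left ?_ hc
          refine le_trans (norm_sum_le _ _) (Finset.sum_le_sum fun j _ => ?_)
          have hne : (List.ofFn fun i => A (j i)) ≠ [] := by
            have : (List.ofFn fun i => A (j i)).length = k := List.length_ofFn
            intro hnil
            rw [hnil] at this
            simp at this
            omega
          calc ‖(List.ofFn fun i => A (j i)).prod‖
              ≤ ((List.ofFn fun i => A (j i)).map norm).prod := List.norm_prod_le' hne
            _ = ∏ i, ‖A (j i)‖ := by rw [List.map_ofFn, List.prod_ofFn]; rfl
            _ ≤ ∏ i, t (j i) :=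
                Finset.prod_le_prod (fun i _ => norm_nonneg _)
                  (fun i _ => psd_norm_le_trace (hA (j i)))
      _ = (((n - k).factorial : ℝ) / (n.factorial : ℝ)) *
            ((k.factorial : ℝ) * esym t Finset.univ k) := by rw [sum_inj]
      _ ≤ ((n : ℝ)⁻¹ * ∑ i, t i) ^ k := by
          have mac := maclaurin ht k hk
          rw [mul_pow, inv_pow, inv_mul_eq_div, div_mul_eq_mul_div, div_le_div_iff₀ hnf hnk]
          nlinarith [mac]
      _ = (((n : ℝ)⁻¹ • ∑ i, A i).trace) ^ k := by rw [htrS]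
      _ ≤ ((d : ℝ) * ‖((n : ℝ)⁻¹ • ∑ i, A i)‖) ^ k := by
          refine pow_le_pow_left₀ ?_ (trace_le_dim_mul_norm _) k
          rw [htrS]; positivity
      _ = (d : ℝ) ^ k * ‖((n : ℝ)⁻¹ • ∑ i, A i)‖ ^ k := mul_pow _ _ _
      _ ≤ (d : ℝ) ^ k * ‖((n : ℝ)⁻¹ • ∑ i, A i) ^ k‖ :=
          mul_le_mul_of_nonneg_left (norm_pow_le_norm_pow hSpsd hkpos) (by positivity)
end
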